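/- arXiv:1705.05777 — 5 statements merged into one kernel-verified Lean document; each statement's English description precedes it below -/
import Mathlib

section
/- Consequently, the empirical distance variance V_n^2 = T_{1,n} + T_{2,n} - 2 T_{3,n} satisfies V_n^2 \le T_{2,n}, i.e., the empirical distance standard deviation is bounded above by the empirical Gini mean difference. -/
open scoped BigOperators

/-- The empirical distance variance `V_n² = T_{1,n} + T_{2,n} - 2 T_{3,n}` is at most
`T_{2,n}`, the squared empirical Gini mean difference. -/
theorem dVar_n_le_T2n (p n : ℕ) (hn : 0 < n) (X : Fin n → EuclideanSpace ℝ (Fin p)) :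
    ((1 / (n : ℝ) ^ 2) * ∑ i, ∑ j, ‖X i - X j‖ ^ 2)
        + ((1 / (n : ℝ) ^ 2) * ∑ i, ∑ j, ‖X i - X j‖) ^ 2
        - 2 * ((1 / (n : ℝ) ^ 3) * ∑ i, ∑ j, ∑ k, ‖X i - X j‖ * ‖X i - X k‖) ≤
      ((1 / (n : ℝ) ^ 2) * ∑ i, ∑ j, ‖X i - X j‖) ^ 2 := by
  set d : Fin n → Fin n → ℝ := fun i j => ‖X i - X j‖ with hd
  have hsymm : ∀ i j, d i j = d j i := fun i j => by simp [hd, norm_sub_rev]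
  have hpos : ∀ i j, 0 ≤ d i j := fun i j => norm_nonneg _
  -- key: n * T1sum ≤ 2 * T3sum
  have e1 : ∑ i, ∑ j, ∑ k, d i j * d i k = ∑ i, (∑ j, d i j) ^ 2 := by
    refine Finset.sum_congr rfl fun i _ => ?_
    rw [sq, Finset.sum_mul_sum]
  have e2 : ∑ i, ∑ j, ∑ k, d i j * d k j = ∑ i, (∑ j, d i j) ^ 2 := by
    calc ∑ i, ∑ j, ∑ k, d i j * d k j = ∑ j, ∑ i, ∑ k, d i j * d k j := Finset.sum_comm
      _ = ∑ j, (∑ i, d i j) ^ 2 := by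
          refine Finset.sum_congr rfl fun j _ => ?_
          rw [sq, Finset.sum_mul_sum]
      _ = ∑ j, (∑ i, d j i) ^ 2 := by
          refine Finset.sum_congr rfl fun j _ => ?_
          rw [Finset.sum_congr rfl fun i _ => hsymm i j]
  have tri : ∀ i j k, d i j ^ 2 ≤ d i j * d i k + d i j * d k j := by
    intro i j k
    have h : d i j ≤ d i k + d k j := by
      simpa [hd, dist_eq_norm] using dist_triangle (X i) (X k) (X j)
    calc d i j ^ 2 = d i j * d i j := sq (d i j)
      _ ≤ d i j * (d i k + d k j) := mul_le_mul_of_nonneg_left h (hpos i j)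
      _ = d i j * d i k + d i j * d k j := by ring
  have key : (n : ℝ) * ∑ i, ∑ j, d i j ^ 2 ≤ 2 * ∑ i, ∑ j, ∑ k, d i j * d i k := by
    have h1 : (n : ℝ) * ∑ i, ∑ j, d i j ^ 2 = ∑ i, ∑ j, ∑ _k : Fin n, d i j ^ 2 := by
      simp [Finset.mul_sum, mul_comm]
    rw [h1]
    have h2 : ∑ i, ∑ j, ∑ k : Fin n, d i j ^ 2
        ≤ ∑ i, ∑ j, ∑ k, (d i j * d i k + d i j * d k j) := by
      refine Finset.sum_le_sum fun i _ => Finset.sum_le_sum fun j _ =>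
        Finset.sum_le_sum fun k _ => tri i j k
    refine h2.trans_eq ?_
    simp only [Finset.sum_add_distrib]
    rw [e1, e2]; ring
  have hn3 : (0 : ℝ) < (n : ℝ) ^ 3 := by positivity
  have main : (1 / (n : ℝ) ^ 2) * ∑ i, ∑ j, d i j ^ 2
      ≤ 2 * ((1 / (n : ℝ) ^ 3) * ∑ i, ∑ j, ∑ k, d i j * d i k) := by
    have hrw : (1 : ℝ) / (n : ℝ) ^ 2 = (n : ℝ) * (1 / (n : ℝ) ^ 3) := by
      have : ((n : ℝ)) ≠ 0 := Nat.cast_ne_zero.mpr hn.ne'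
      field_simp
    rw [hrw, mul_assoc, mul_comm (n : ℝ), mul_assoc, mul_comm (2 : ℝ), mul_assoc]
    exact mul_le_mul_of_nonneg_left (by linarith [key]) (by positivity)
  linarith [main]
end

section
/- The empirical distance variance V_n^2 = T_{1,n} + T_{2,n} - 2 T_{3,n} is at most (1/2) T_{1,n}; in particular, in dimension one it is bounded above by the (biased) empirical variance n^{-2} \sum_{i<j} (X_i - X_j)^2 \cdot 2 / 2 = half of T_{1,n}. -/
open scoped BigOperators

/-- The empirical distance variance `V_n² = T_{1,n} + T_{2,n} - 2 T_{3,n}` is at most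
one-half of `T_{1,n}`. -/
theorem dVar_n_le_half_T1n (p n : ℕ) (hn : 0 < n) (X : Fin n → EuclideanSpace ℝ (Fin p)) :
    ((1 / (n : ℝ) ^ 2) * ∑ i, ∑ j, ‖X i - X j‖ ^ 2)
        + ((1 / (n : ℝ) ^ 2) * ∑ i, ∑ j, ‖X i - X j‖) ^ 2
        - 2 * ((1 / (n : ℝ) ^ 3) * ∑ i, ∑ j, ∑ k, ‖X i - X j‖ * ‖X i - X k‖) ≤
      (1 / 2) * ((1 / (n : ℝ) ^ 2) * ∑ i, ∑ j, ‖X i - X j‖ ^ 2) := by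
  set a : Fin n → Fin n → ℝ := fun i j => ‖X i - X j‖ with ha
  have hsym : ∀ i j, a i j = a j i := fun i j => by simp [ha, norm_sub_rev]
  have hnn : ∀ i j, 0 ≤ a i j := fun i j => norm_nonneg _
  have hpos : (0:ℝ) < (n:ℝ) := by exact_mod_cast hn
  set S1 : ℝ := ∑ i, ∑ j, a i j ^ 2 with hS1
  set S : ℝ := ∑ i, ∑ j, a i j with hS
  set S3 : ℝ := ∑ i, (∑ j, a i j) ^ 2 with hS3
  -- the triple sum equals S3
  have htriple : ∑ i, ∑ j, ∑ k, a i j * a i k = S3 := by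
    refine Finset.sum_congr rfl fun i _ => ?_
    rw [sq, Finset.sum_mul_sum]
  -- Cauchy-Schwarz: S^2 ≤ n * S3
  have hA : S ^ 2 ≤ (n : ℝ) * S3 := by
    have := sq_sum_le_card_mul_sum_sq (s := (Finset.univ : Finset (Fin n)))
      (f := fun i => ∑ j, a i j)
    simpa using this
  -- triangle inequality consequence: n * S1 ≤ 2 * S3
  have e1 : ∑ i, ∑ j, ∑ k, a j k * a j i = S3 := by
    rw [Finset.sum_comm]
    refine Finset.sum_congr rfl fun j _ => ?_
    calc ∑ i, ∑ k, a j k * a j i = ∑ i, (∑ k, a j k) * a j i := by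
          refine Finset.sum_congr rfl fun i _ => ?_
          rw [Finset.sum_mul]
      _ = (∑ k, a j k) * ∑ i, a j i := by rw [← Finset.mul_sum]
      _ = (∑ j', a j j') ^ 2 := by rw [sq]
  have e2 : ∑ i, ∑ j, ∑ k, a j k * a i k = S3 := by
    calc ∑ i, ∑ j, ∑ k, a j k * a i k
        = ∑ i, ∑ k, ∑ j, a j k * a i k := by
          exact Finset.sum_congr rfl fun i _ => Finset.sum_comm
      _ = ∑ i, ∑ k, (∑ j, a j k) * a i k := by
          refine Finset.sum_congr rfl fun i _ => Finset.sum_congr rfl fun k _ => ?_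
          rw [Finset.sum_mul]
      _ = ∑ k, ∑ i, (∑ j, a j k) * a i k := Finset.sum_comm
      _ = ∑ k, (∑ j, a j k) * ∑ i, a i k := by
          refine Finset.sum_congr rfl fun k _ => ?_
          rw [← Finset.mul_sum]
      _ = ∑ k, (∑ j, a k j) ^ 2 := by
          refine Finset.sum_congr rfl fun k _ => ?_
          rw [sq]
          congr 1 <;> exact Finset.sum_congr rfl fun x _ => hsym x k
      _ = S3 := rfl
  have hC : (n : ℝ) * S1 ≤ 2 * S3 := by
    have hstep : ∑ i : Fin n, ∑ j, ∑ k, (a j k) ^ 2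
        ≤ ∑ i : Fin n, ∑ j, ∑ k, (a j k * a j i + a j k * a i k) := by
      refine Finset.sum_le_sum fun i _ => Finset.sum_le_sum fun j _ =>
        Finset.sum_le_sum fun k _ => ?_
      have htri : a j k ≤ a j i + a i k := by
        have := norm_add_le (X j - X i) (X i - X k)
        simpa [ha, sub_add_sub_cancel] using this
      have := mul_le_mul_of_nonneg_left htri (hnn j k)
      calc a j k ^ 2 = a j k * a j k := sq (a j k)
        _ ≤ a j k * (a j i + a i k) := this
        _ = a j k * a j i + a j k * a i k := by ring
    have hleft : ∑ i : Fin n, ∑ j, ∑ k, (a j k) ^ 2 = (n : ℝ) * S1 := by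
      rw [Finset.sum_const, Finset.card_univ, Fintype.card_fin, nsmul_eq_mul]
    have hright : ∑ i : Fin n, ∑ j, ∑ k, (a j k * a j i + a j k * a i k) = 2 * S3 := by
      have : ∑ i : Fin n, ∑ j, ∑ k, (a j k * a j i + a j k * a i k)
          = (∑ i, ∑ j, ∑ k, a j k * a j i) + ∑ i, ∑ j, ∑ k, a j k * a i k := by
        simp [Finset.sum_add_distrib]
      rw [this, e1, e2]; ring
    rw [← hleft, ← hright]; exact hstep
  -- assemble
  rw [htriple]
  have hC' : (n : ℝ) ^ 2 * S1 ≤ 2 * ((n : ℝ) * S3) := by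
    have := mul_le_mul_of_nonneg_left hC hpos.le
    nlinarith [this]
  have main : (n:ℝ)^2 * S1 + S^2 - 2*((n:ℝ)*S3) ≤ (1/2) * ((n:ℝ)^2 * S1) := by
    linarith [hA, hC']
  have hn4 : (0:ℝ) < (n:ℝ)^4 := by positivity
  have lhs_eq : (1 / (n : ℝ) ^ 2) * S1 + ((1 / (n : ℝ) ^ 2) * S) ^ 2
      - 2 * ((1 / (n : ℝ) ^ 3) * S3)
      = ((n:ℝ)^2 * S1 + S^2 - 2*((n:ℝ)*S3)) / (n:ℝ)^4 := by
    field_simp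
  have rhs_eq : (1/2 : ℝ) * ((1 / (n : ℝ) ^ 2) * S1)
      = ((1/2) * ((n:ℝ)^2 * S1)) / (n:ℝ)^4 := by
    field_simp
  rw [lhs_eq, rhs_eq]
  gcongr
end

section
/- Let X be a random vector in R^p with E||X||^2 < \infty and components X^{(1)},...,X^{(p)}. Then the distance variance V^2(X) = T_1 + T_2 - 2T_3 satisfies V^2(X) \le \sum_{i=1}^p Var(X^{(i)}), where T_1 = E||X-X'||^2, T_2 = (E||X-X'||)^2, T_3 = E(||X-X'|| \cdot ||X-X''||) for i.i.d. copies X', X'' of X. -/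
open MeasureTheory
open scoped BigOperators

section Aux

variable {α β : Type*} [MeasurableSpace α] [MeasurableSpace β]

lemma aux_int_comp_fst (μ : Measure α) (ν : Measure β) [SFinite μ] [SFinite ν]
    [IsProbabilityMeasure ν] {f : α → ℝ} (hf : Integrable f μ) :
    Integrable (fun q : α × β => f q.1) (μ.prod ν) := by
  simpa using hf.mul_prod (integrable_const (1 : ℝ))

lemma aux_int_comp_snd (μ : Measure α) (ν : Measure β) [SFinite μ] [SFinite ν]
    [IsProbabilityMeasure μ] {f : β → ℝ} (hf : Integrable f ν) :
    Integrable (fun q : α × β => f q.2) (μ.prod ν) := by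
  simpa using (integrable_const (1 : ℝ)).mul_prod hf

lemma aux_integral_comp_fst (μ : Measure α) (ν : Measure β) [SFinite μ] [SFinite ν]
    [IsProbabilityMeasure ν] (f : α → ℝ) :
    (∫ q, f q.1 ∂(μ.prod ν)) = ∫ x, f x ∂μ := by
  simpa using integral_prod_mul (μ := μ) (ν := ν) f (fun _ : β => (1 : ℝ))

lemma aux_integral_comp_snd (μ : Measure α) (ν : Measure β) [SFinite μ] [SFinite ν]
    [IsProbabilityMeasure μ] (f : β → ℝ) :
    (∫ q, f q.2 ∂(μ.prod ν)) = ∫ y, f y ∂ν := by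
  simpa using integral_prod_mul (μ := μ) (ν := ν) (fun _ : α => (1 : ℝ)) f

end Aux

set_option maxHeartbeats 2000000 in
/-- For a random vector `X` in `ℝ^p` with law `μ` and `E‖X‖² < ∞`, the distance variance
`V²(X) = T₁ + T₂ - 2T₃` is at most the sum of the variances of the components of `X`. -/
theorem dVar_le_sum_var (p : ℕ) (μ : Measure (EuclideanSpace ℝ (Fin p)))
    [IsProbabilityMeasure μ] (h2 : Integrable (fun x => ‖x‖ ^ 2) μ) :
    (∫ q, ‖q.1 - q.2‖ ^ 2 ∂(μ.prod μ))
        + (∫ q, ‖q.1 - q.2‖ ∂(μ.prod μ)) ^ 2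
        - 2 * (∫ q, ‖q.1 - q.2.1‖ * ‖q.1 - q.2.2‖ ∂(μ.prod (μ.prod μ))) ≤
      ∑ i : Fin p, ∫ x, (x i - ∫ y, y i ∂μ) ^ 2 ∂μ := by
  haveI : OpensMeasurableSpace (EuclideanSpace ℝ (Fin p) × EuclideanSpace ℝ (Fin p) ×
    EuclideanSpace ℝ (Fin p)) := inferInstance
  -- basic integrability
  have h1 : Integrable (fun x : (EuclideanSpace ℝ (Fin p)) => ‖x‖) μ := by
    refine (h2.add (integrable_const 1)).mono
      continuous_norm.aestronglyMeasurable ?_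
    filter_upwards with x
    try simp only [Pi.add_apply]
    rw [Real.norm_eq_abs, abs_of_nonneg (norm_nonneg x), Real.norm_eq_abs]
    have h : ‖x‖ ≤ ‖x‖ ^ 2 + 1 := by nlinarith [sq_nonneg (‖x‖ - 1)]
    calc ‖x‖ ≤ ‖x‖ ^ 2 + 1 := h
    _ ≤ |‖x‖ ^ 2 + 1| := le_abs_self _
  -- the mean distance function
  set f : (EuclideanSpace ℝ (Fin p)) → ℝ := fun x => ∫ y, ‖x - y‖ ∂μ with hf
  set C : ℝ := ∫ y : (EuclideanSpace ℝ (Fin p)), ‖y‖ ∂μ with hC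
  have hmeas_sub : StronglyMeasurable (fun q : (EuclideanSpace ℝ (Fin p)) × (EuclideanSpace ℝ (Fin p)) => ‖q.1 - q.2‖) :=
    (continuous_fst.sub continuous_snd).norm.stronglyMeasurable
  have hmf : StronglyMeasurable f := hmeas_sub.integral_prod_right'
  have hint_sub : ∀ x : (EuclideanSpace ℝ (Fin p)), Integrable (fun y : (EuclideanSpace ℝ (Fin p)) => ‖x - y‖) μ := by
    intro x
    refine ((integrable_const ‖x‖).add h1).mono
      (continuous_const.sub continuous_id).norm.aestronglyMeasurable ?_
    filter_upwards with y
    try simp only [Pi.add_apply]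
    rw [Real.norm_eq_abs, abs_of_nonneg (norm_nonneg _), Real.norm_eq_abs]
    calc ‖x - y‖ ≤ ‖x‖ + ‖y‖ := norm_sub_le x y
    _ ≤ |‖x‖ + ‖y‖| := le_abs_self _
  have hint_sub' : ∀ y : (EuclideanSpace ℝ (Fin p)), Integrable (fun z : (EuclideanSpace ℝ (Fin p)) => ‖z - y‖) μ := fun y =>
    (hint_sub y).congr (Filter.Eventually.of_forall fun z => norm_sub_rev y z)
  have hf_nonneg : ∀ x, 0 ≤ f x := fun x => integral_nonneg fun y => norm_nonneg _
  have hf_le : ∀ x, f x ≤ ‖x‖ + C := by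
    intro x
    have : f x ≤ ∫ y : (EuclideanSpace ℝ (Fin p)), (‖x‖ + ‖y‖) ∂μ :=
      integral_mono (hint_sub x) ((integrable_const ‖x‖).add h1) fun y => norm_sub_le x y
    simpa [integral_add (integrable_const ‖x‖) h1, hC] using this
  have hC_nonneg : 0 ≤ C := integral_nonneg fun y => norm_nonneg _
  have hf_int : Integrable f μ := by
    refine ((integrable_const C).add h1).mono hmf.aestronglyMeasurable ?_
    filter_upwards with x
    try simp only [Pi.add_apply]
    rw [Real.norm_eq_abs, abs_of_nonneg (hf_nonneg x), Real.norm_eq_abs,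
      abs_of_nonneg (by positivity)]
    have := hf_le x; linarith
  have hf2_int : Integrable (fun x => f x ^ 2) μ := by
    refine ((h2.const_mul 2).add (integrable_const (2 * C ^ 2))).mono
      (hmf.pow 2).aestronglyMeasurable ?_
    filter_upwards with x
    try simp only [Pi.add_apply]
    rw [Real.norm_eq_abs, abs_of_nonneg (sq_nonneg _), Real.norm_eq_abs,
      abs_of_nonneg (by positivity)]
    have h3 := hf_le x
    have h4 := hf_nonneg x
    nlinarith [sq_nonneg (‖x‖ - C), norm_nonneg x]
  -- integrability over products
  have hint1 : Integrable (fun q : (EuclideanSpace ℝ (Fin p)) × (EuclideanSpace ℝ (Fin p)) => ‖q.1 - q.2‖) (μ.prod μ) := by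
    refine ((aux_int_comp_fst μ μ h1).add (aux_int_comp_snd μ μ h1)).mono
      hmeas_sub.aestronglyMeasurable ?_
    filter_upwards with q
    try simp only [Pi.add_apply]
    rw [Real.norm_eq_abs, abs_of_nonneg (norm_nonneg _), Real.norm_eq_abs,
      abs_of_nonneg (by positivity)]
    exact norm_sub_le _ _
  have hint2 : Integrable (fun q : (EuclideanSpace ℝ (Fin p)) × (EuclideanSpace ℝ (Fin p)) => ‖q.1 - q.2‖ ^ 2) (μ.prod μ) := by
    refine (((aux_int_comp_fst μ μ h2).add (aux_int_comp_snd μ μ h2)).add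
      ((h1.mul_prod h1).const_mul 2)).mono
      (hmeas_sub.pow 2).aestronglyMeasurable ?_
    filter_upwards with q
    try simp only [Pi.add_apply]
    rw [Real.norm_eq_abs, abs_of_nonneg (sq_nonneg _), Real.norm_eq_abs]
    have h := norm_sub_le q.1 q.2
    have h1' := norm_nonneg q.1
    have h2' := norm_nonneg q.2
    have hb : ‖q.1 - q.2‖ ^ 2 ≤ ‖q.1‖ ^ 2 + ‖q.2‖ ^ 2 + 2 * (‖q.1‖ * ‖q.2‖) := by
      nlinarith [norm_nonneg (q.1 - q.2)]
    calc ‖q.1 - q.2‖ ^ 2 ≤ ‖q.1‖ ^ 2 + ‖q.2‖ ^ 2 + 2 * (‖q.1‖ * ‖q.2‖) := hb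
    _ ≤ |‖q.1‖ ^ 2 + ‖q.2‖ ^ 2 + 2 * (‖q.1‖ * ‖q.2‖)| := le_abs_self _
  have hint3 : Integrable
      (fun q : (EuclideanSpace ℝ (Fin p)) × (EuclideanSpace ℝ (Fin p)) × (EuclideanSpace ℝ (Fin p)) => ‖q.1 - q.2.1‖ * ‖q.1 - q.2.2‖) (μ.prod (μ.prod μ)) := by
    have hmeas : StronglyMeasurable (fun q : (EuclideanSpace ℝ (Fin p)) × (EuclideanSpace ℝ (Fin p)) × (EuclideanSpace ℝ (Fin p)) => ‖q.1 - q.2.1‖ * ‖q.1 - q.2.2‖) :=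
      ((continuous_fst.sub (continuous_fst.comp continuous_snd)).norm.mul
        (continuous_fst.sub (continuous_snd.comp continuous_snd)).norm).stronglyMeasurable
    have hA : Integrable (fun q : (EuclideanSpace ℝ (Fin p)) × (EuclideanSpace ℝ (Fin p)) × (EuclideanSpace ℝ (Fin p)) => ‖q.1‖ ^ 2) (μ.prod (μ.prod μ)) :=
      aux_int_comp_fst μ (μ.prod μ) h2
    have hB : Integrable (fun q : (EuclideanSpace ℝ (Fin p)) × (EuclideanSpace ℝ (Fin p)) × (EuclideanSpace ℝ (Fin p)) => ‖q.1‖ * ‖q.2.1‖) (μ.prod (μ.prod μ)) :=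
      h1.mul_prod (aux_int_comp_fst μ μ h1)
    have hD : Integrable (fun q : (EuclideanSpace ℝ (Fin p)) × (EuclideanSpace ℝ (Fin p)) × (EuclideanSpace ℝ (Fin p)) => ‖q.1‖ * ‖q.2.2‖) (μ.prod (μ.prod μ)) :=
      h1.mul_prod (aux_int_comp_snd μ μ h1)
    have hG : Integrable (fun q : (EuclideanSpace ℝ (Fin p)) × (EuclideanSpace ℝ (Fin p)) × (EuclideanSpace ℝ (Fin p)) => ‖q.2.1‖ * ‖q.2.2‖) (μ.prod (μ.prod μ)) :=
      aux_int_comp_snd μ (μ.prod μ) (h1.mul_prod h1)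
    refine (((hA.add hB).add hD).add hG).mono hmeas.aestronglyMeasurable ?_
    filter_upwards with q
    try simp only [Pi.add_apply]
    rw [Real.norm_eq_abs, abs_of_nonneg (by positivity), Real.norm_eq_abs]
    have t1 := norm_sub_le q.1 q.2.1
    have t2 := norm_sub_le q.1 q.2.2
    have hb : ‖q.1 - q.2.1‖ * ‖q.1 - q.2.2‖ ≤
        ‖q.1‖ ^ 2 + ‖q.1‖ * ‖q.2.1‖ + ‖q.1‖ * ‖q.2.2‖ + ‖q.2.1‖ * ‖q.2.2‖ := by
      nlinarith [norm_nonneg (q.1 - q.2.1), norm_nonneg (q.1 - q.2.2), norm_nonneg q.1,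
        norm_nonneg q.2.1, norm_nonneg q.2.2]
    calc ‖q.1 - q.2.1‖ * ‖q.1 - q.2.2‖ ≤
        ‖q.1‖ ^ 2 + ‖q.1‖ * ‖q.2.1‖ + ‖q.1‖ * ‖q.2.2‖ + ‖q.2.1‖ * ‖q.2.2‖ := hb
    _ ≤ |‖q.1‖ ^ 2 + ‖q.1‖ * ‖q.2.1‖ + ‖q.1‖ * ‖q.2.2‖ + ‖q.2.1‖ * ‖q.2.2‖| := le_abs_self _
  -- T₃ = ∫ f²
  have hT3 : (∫ q, ‖q.1 - q.2.1‖ * ‖q.1 - q.2.2‖ ∂(μ.prod (μ.prod μ)))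
      = ∫ x, f x ^ 2 ∂μ := by
    rw [integral_prod _ hint3]
    refine integral_congr_ae (Filter.Eventually.of_forall fun x => ?_)
    show (∫ yz : (EuclideanSpace ℝ (Fin p)) × (EuclideanSpace ℝ (Fin p)), ‖x - yz.1‖ * ‖x - yz.2‖ ∂(μ.prod μ)) = f x ^ 2
    rw [integral_prod_mul (fun y => ‖x - y‖) (fun z => ‖x - z‖)]
    show f x * f x = f x ^ 2
    ring
  -- T₂ inner integral
  have hT2 : (∫ q : (EuclideanSpace ℝ (Fin p)) × (EuclideanSpace ℝ (Fin p)), ‖q.1 - q.2‖ ∂(μ.prod μ)) = ∫ x, f x ∂μ := by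
    rw [integral_prod _ hint1]
  -- (∫ f)² ≤ ∫ f²
  have hJensen : (∫ x, f x ∂μ) ^ 2 ≤ ∫ x, f x ^ 2 ∂μ := by
    set c : ℝ := ∫ x, f x ∂μ with hc
    have h0 : 0 ≤ ∫ x, (f x - c) ^ 2 ∂μ := integral_nonneg fun x => sq_nonneg _
    have hexp : (fun x => (f x - c) ^ 2) = fun x => f x ^ 2 - 2 * c * f x + c ^ 2 := by
      funext x; ring
    have hconst : Integrable (fun _ : (EuclideanSpace ℝ (Fin p)) => 2 * c * f 0) μ := integrable_const _
    have hcm : Integrable (fun x => 2 * c * f x) μ := hf_int.const_mul (2 * c)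
    have hsub : Integrable (fun x => f x ^ 2 - 2 * c * f x) μ := hf2_int.sub hcm
    rw [hexp, integral_add hsub (integrable_const _),
      integral_sub hf2_int hcm, integral_const_mul, integral_const,
      probReal_univ] at h0
    simp only [ENNReal.toReal_one, smul_eq_mul, one_mul] at h0
    nlinarith [h0]
  -- pointwise bound for T₁
  have hpt : ∀ x y : (EuclideanSpace ℝ (Fin p)), ‖x - y‖ ^ 2 ≤ ‖x - y‖ * f x + ‖x - y‖ * f y := by
    intro x y
    have hxy : ‖x - y‖ ≤ f x + f y := by
      have e1 : ‖x - y‖ = ∫ _z : (EuclideanSpace ℝ (Fin p)), ‖x - y‖ ∂μ := by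
        rw [integral_const, probReal_univ]; simp
      have e2 : (∫ z : (EuclideanSpace ℝ (Fin p)), (‖x - z‖ + ‖z - y‖) ∂μ) = f x + f y := by
        rw [integral_add (hint_sub x) (hint_sub' y)]
        congr 1
        exact integral_congr_ae (Filter.Eventually.of_forall fun z => norm_sub_rev z y)
      rw [e1, ← e2]
      refine integral_mono (integrable_const _) ((hint_sub x).add (hint_sub' y)) fun z => ?_
      calc ‖x - y‖ = ‖(x - z) + (z - y)‖ := by rw [sub_add_sub_cancel]
      _ ≤ ‖x - z‖ + ‖z - y‖ := norm_add_le _ _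
    have hm := mul_le_mul_of_nonneg_left hxy (norm_nonneg (x - y))
    nlinarith [norm_nonneg (x - y)]
  -- integrability of the cross terms
  have hmf_fst : AEStronglyMeasurable (fun q : (EuclideanSpace ℝ (Fin p)) × (EuclideanSpace ℝ (Fin p)) => ‖q.1 - q.2‖ * f q.1) (μ.prod μ) :=
    (hmeas_sub.mul (hmf.comp_measurable measurable_fst)).aestronglyMeasurable
  have hmf_snd : AEStronglyMeasurable (fun q : (EuclideanSpace ℝ (Fin p)) × (EuclideanSpace ℝ (Fin p)) => ‖q.1 - q.2‖ * f q.2) (μ.prod μ) :=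
    (hmeas_sub.mul (hmf.comp_measurable measurable_snd)).aestronglyMeasurable
  have hbound : ∀ (x y : (EuclideanSpace ℝ (Fin p))) (z : ℝ), 0 ≤ z → z ≤ ‖x‖ + C → ‖x - y‖ * z ≤
      ‖x‖ ^ 2 + C * ‖x‖ + ‖x‖ * ‖y‖ + C * ‖y‖ := by
    intro x y z hz hzle
    have := norm_sub_le x y
    nlinarith [norm_nonneg x, norm_nonneg y, norm_nonneg (x - y)]
  have hdom : Integrable (fun q : (EuclideanSpace ℝ (Fin p)) × (EuclideanSpace ℝ (Fin p)) =>
      ‖q.1‖ ^ 2 + C * ‖q.1‖ + ‖q.1‖ * ‖q.2‖ + C * ‖q.2‖) (μ.prod μ) :=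
    (((aux_int_comp_fst μ μ h2).add ((aux_int_comp_fst μ μ h1).const_mul C)).add
      (h1.mul_prod h1)).add ((aux_int_comp_snd μ μ h1).const_mul C)
  have hdom' : Integrable (fun q : (EuclideanSpace ℝ (Fin p)) × (EuclideanSpace ℝ (Fin p)) =>
      ‖q.2‖ ^ 2 + C * ‖q.2‖ + ‖q.2‖ * ‖q.1‖ + C * ‖q.1‖) (μ.prod μ) := by
    have hmul : Integrable (fun q : (EuclideanSpace ℝ (Fin p)) × (EuclideanSpace ℝ (Fin p)) => ‖q.2‖ * ‖q.1‖) (μ.prod μ) := by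
      refine (h1.mul_prod h1).congr (Filter.Eventually.of_forall fun q => mul_comm _ _)
    exact (((aux_int_comp_snd μ μ h2).add ((aux_int_comp_snd μ μ h1).const_mul C)).add
      hmul).add ((aux_int_comp_fst μ μ h1).const_mul C)
  have hcrossA : Integrable (fun q : (EuclideanSpace ℝ (Fin p)) × (EuclideanSpace ℝ (Fin p)) => ‖q.1 - q.2‖ * f q.1) (μ.prod μ) := by
    refine hdom.mono' hmf_fst ?_
    filter_upwards with q
    try simp only [Pi.add_apply]
    rw [Real.norm_eq_abs, abs_of_nonneg (mul_nonneg (norm_nonneg _) (hf_nonneg _))]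
    exact hbound q.1 q.2 (f q.1) (hf_nonneg _) (hf_le _)
  have hcrossB : Integrable (fun q : (EuclideanSpace ℝ (Fin p)) × (EuclideanSpace ℝ (Fin p)) => ‖q.1 - q.2‖ * f q.2) (μ.prod μ) := by
    refine hdom'.mono' hmf_snd ?_
    filter_upwards with q
    try simp only [Pi.add_apply]
    rw [Real.norm_eq_abs, abs_of_nonneg (mul_nonneg (norm_nonneg _) (hf_nonneg _))]
    have := hbound q.2 q.1 (f q.2) (hf_nonneg _) (hf_le _)
    rwa [norm_sub_rev] at this
  -- compute the cross integrals
  have hintA : (∫ q : (EuclideanSpace ℝ (Fin p)) × (EuclideanSpace ℝ (Fin p)), ‖q.1 - q.2‖ * f q.1 ∂(μ.prod μ)) = ∫ x, f x ^ 2 ∂μ := by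
    rw [integral_prod _ hcrossA]
    refine integral_congr_ae (Filter.Eventually.of_forall fun x => ?_)
    show (∫ y, ‖x - y‖ * f x ∂μ) = f x ^ 2
    rw [integral_mul_const]
    show f x * f x = f x ^ 2
    ring
  have hintB : (∫ q : (EuclideanSpace ℝ (Fin p)) × (EuclideanSpace ℝ (Fin p)), ‖q.1 - q.2‖ * f q.2 ∂(μ.prod μ)) = ∫ x, f x ^ 2 ∂μ := by
    rw [integral_prod _ hcrossB]
    show (∫ x, ∫ y, ‖x - y‖ * f y ∂μ ∂μ) = ∫ x, f x ^ 2 ∂μ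
    rw [integral_integral_swap (f := fun x y : (EuclideanSpace ℝ (Fin p)) => ‖x - y‖ * f y) hcrossB]
    refine integral_congr_ae (Filter.Eventually.of_forall fun y => ?_)
    show (∫ x, ‖x - y‖ * f y ∂μ) = f y ^ 2
    rw [integral_mul_const]
    have : (∫ x : (EuclideanSpace ℝ (Fin p)), ‖x - y‖ ∂μ) = f y := by
      refine integral_congr_ae (Filter.Eventually.of_forall fun x => norm_sub_rev x y)
    rw [this]
    show f y * f y = f y ^ 2
    ring
  -- T₁ ≤ 2 ∫ f²
  have hT1le : (∫ q : (EuclideanSpace ℝ (Fin p)) × (EuclideanSpace ℝ (Fin p)), ‖q.1 - q.2‖ ^ 2 ∂(μ.prod μ)) ≤ 2 * ∫ x, f x ^ 2 ∂μ := by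
    have hsum : Integrable (fun q : (EuclideanSpace ℝ (Fin p)) × (EuclideanSpace ℝ (Fin p)) =>
        ‖q.1 - q.2‖ * f q.1 + ‖q.1 - q.2‖ * f q.2) (μ.prod μ) := hcrossA.add hcrossB
    have hm := integral_mono hint2 hsum fun q => hpt q.1 q.2
    rw [integral_add hcrossA hcrossB, hintA, hintB] at hm
    linarith
  -- coordinates
  set m : Fin p → ℝ := fun i => ∫ y : (EuclideanSpace ℝ (Fin p)), y i ∂μ with hm
  have hcont : ∀ i : Fin p, Continuous (fun x : (EuclideanSpace ℝ (Fin p)) => x i) := by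
    intro i
    exact (EuclideanSpace.proj (𝕜 := ℝ) i).continuous
  have habs : ∀ (i : Fin p) (x : (EuclideanSpace ℝ (Fin p))), |x i| ≤ ‖x‖ := by
    intro i x
    rw [EuclideanSpace.norm_eq, ← Real.sqrt_sq_eq_abs]
    refine Real.sqrt_le_sqrt ?_
    have : ‖x i‖ ^ 2 = x i ^ 2 := by rw [Real.norm_eq_abs, sq_abs]
    rw [← this]
    exact Finset.single_le_sum (f := fun j => ‖x j‖ ^ 2) (fun j _ => by positivity) (Finset.mem_univ i)
  have hcoord_int : ∀ i : Fin p, Integrable (fun x : (EuclideanSpace ℝ (Fin p)) => x i) μ := by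
    intro i
    refine h1.mono' (hcont i).aestronglyMeasurable ?_
    filter_upwards with x
    try simp only [Pi.add_apply]
    rw [Real.norm_eq_abs]
    exact habs i x
  have hgi_int : ∀ i : Fin p, Integrable (fun x : (EuclideanSpace ℝ (Fin p)) => x i - m i) μ := fun i =>
    (hcoord_int i).sub (integrable_const _)
  have hgi_mean : ∀ i : Fin p, (∫ x : (EuclideanSpace ℝ (Fin p)), (x i - m i) ∂μ) = 0 := by
    intro i
    rw [integral_sub (hcoord_int i) (integrable_const _), integral_const, probReal_univ]
    simp [hm]
  have hgi2_int : ∀ i : Fin p, Integrable (fun x : (EuclideanSpace ℝ (Fin p)) => (x i - m i) ^ 2) μ := by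
    intro i
    refine ((h2.const_mul 2).add (integrable_const (2 * m i ^ 2))).mono
      (((hcont i).sub continuous_const).pow 2).aestronglyMeasurable ?_
    filter_upwards with x
    try simp only [Pi.add_apply]
    rw [Real.norm_eq_abs, abs_of_nonneg (sq_nonneg _), Real.norm_eq_abs,
      abs_of_nonneg (by positivity)]
    have := habs i x
    have := abs_nonneg (x i)
    nlinarith [sq_nonneg (x i - m i + m i), sq_nonneg (|x i| - ‖x‖), sq_nonneg (x i + m i),
      sq_abs (x i)]
  have hprod_coord : ∀ i : Fin p,
      Integrable (fun q : (EuclideanSpace ℝ (Fin p)) × (EuclideanSpace ℝ (Fin p)) => (q.1 i - q.2 i) ^ 2) (μ.prod μ) := by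
    intro i
    refine hint2.mono' ((((hcont i).comp continuous_fst).sub
      ((hcont i).comp continuous_snd)).pow 2).aestronglyMeasurable ?_
    filter_upwards with q
    try simp only [Pi.add_apply]
    rw [Real.norm_eq_abs, abs_of_nonneg (sq_nonneg _)]
    have h := habs i (q.1 - q.2)
    have hsub : (q.1 - q.2) i = q.1 i - q.2 i := rfl
    rw [hsub] at h
    nlinarith [abs_nonneg (q.1 i - q.2 i), sq_abs (q.1 i - q.2 i), norm_nonneg (q.1 - q.2)]
  have hcoord2 : ∀ i : Fin p, (∫ q : (EuclideanSpace ℝ (Fin p)) × (EuclideanSpace ℝ (Fin p)), (q.1 i - q.2 i) ^ 2 ∂(μ.prod μ))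
      = 2 * ∫ x : (EuclideanSpace ℝ (Fin p)), (x i - m i) ^ 2 ∂μ := by
    intro i
    have hexp : (fun q : (EuclideanSpace ℝ (Fin p)) × (EuclideanSpace ℝ (Fin p)) => (q.1 i - q.2 i) ^ 2) = fun q : (EuclideanSpace ℝ (Fin p)) × (EuclideanSpace ℝ (Fin p)) =>
        ((q.1 i - m i) ^ 2 + (q.2 i - m i) ^ 2) -
          2 * ((q.1 i - m i) * (q.2 i - m i)) := by
      funext q; ring
    have hA : Integrable (fun q : (EuclideanSpace ℝ (Fin p)) × (EuclideanSpace ℝ (Fin p)) => (q.1 i - m i) ^ 2) (μ.prod μ) :=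
      aux_int_comp_fst μ μ (hgi2_int i)
    have hB : Integrable (fun q : (EuclideanSpace ℝ (Fin p)) × (EuclideanSpace ℝ (Fin p)) => (q.2 i - m i) ^ 2) (μ.prod μ) :=
      aux_int_comp_snd μ μ (hgi2_int i)
    have hAB : Integrable (fun q : (EuclideanSpace ℝ (Fin p)) × (EuclideanSpace ℝ (Fin p)) => (q.1 i - m i) * (q.2 i - m i)) (μ.prod μ) :=
      (hgi_int i).mul_prod (hgi_int i)
    have hABsum : Integrable (fun q : (EuclideanSpace ℝ (Fin p)) × (EuclideanSpace ℝ (Fin p)) =>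
        (q.1 i - m i) ^ 2 + (q.2 i - m i) ^ 2) (μ.prod μ) := hA.add hB
    have hABc : Integrable (fun q : (EuclideanSpace ℝ (Fin p)) × (EuclideanSpace ℝ (Fin p)) =>
        2 * ((q.1 i - m i) * (q.2 i - m i))) (μ.prod μ) := hAB.const_mul 2
    rw [hexp, integral_sub hABsum hABc, integral_add hA hB,
      integral_const_mul]
    have e1 : (∫ q : (EuclideanSpace ℝ (Fin p)) × (EuclideanSpace ℝ (Fin p)), (q.1 i - m i) ^ 2 ∂(μ.prod μ)) = ∫ x : (EuclideanSpace ℝ (Fin p)), (x i - m i) ^ 2 ∂μ :=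
      aux_integral_comp_fst μ μ (fun x => (x i - m i) ^ 2)
    have e2 : (∫ q : (EuclideanSpace ℝ (Fin p)) × (EuclideanSpace ℝ (Fin p)), (q.2 i - m i) ^ 2 ∂(μ.prod μ)) = ∫ x : (EuclideanSpace ℝ (Fin p)), (x i - m i) ^ 2 ∂μ :=
      aux_integral_comp_snd μ μ (fun x => (x i - m i) ^ 2)
    have e3 : (∫ q : (EuclideanSpace ℝ (Fin p)) × (EuclideanSpace ℝ (Fin p)), (q.1 i - m i) * (q.2 i - m i) ∂(μ.prod μ)) = 0 := by
      rw [integral_prod_mul (fun x : (EuclideanSpace ℝ (Fin p)) => x i - m i) (fun x : (EuclideanSpace ℝ (Fin p)) => x i - m i), hgi_mean i]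
      ring
    rw [e1, e2, e3]
    ring
  -- T₁ = 2 ∑ Var
  have hT1eq : (∫ q : (EuclideanSpace ℝ (Fin p)) × (EuclideanSpace ℝ (Fin p)), ‖q.1 - q.2‖ ^ 2 ∂(μ.prod μ))
      = 2 * ∑ i : Fin p, ∫ x : (EuclideanSpace ℝ (Fin p)), (x i - m i) ^ 2 ∂μ := by
    have hnorm : ∀ q : (EuclideanSpace ℝ (Fin p)) × (EuclideanSpace ℝ (Fin p)), ‖q.1 - q.2‖ ^ 2 = ∑ i : Fin p, (q.1 i - q.2 i) ^ 2 := by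
      intro q
      rw [EuclideanSpace.norm_eq, Real.sq_sqrt (by positivity)]
      refine Finset.sum_congr rfl fun i _ => ?_
      have hsub : (q.1 - q.2) i = q.1 i - q.2 i := rfl
      rw [hsub, Real.norm_eq_abs, sq_abs]
    calc (∫ q : (EuclideanSpace ℝ (Fin p)) × (EuclideanSpace ℝ (Fin p)), ‖q.1 - q.2‖ ^ 2 ∂(μ.prod μ))
        = ∫ q : (EuclideanSpace ℝ (Fin p)) × (EuclideanSpace ℝ (Fin p)), ∑ i : Fin p, (q.1 i - q.2 i) ^ 2 ∂(μ.prod μ) :=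
          integral_congr_ae (Filter.Eventually.of_forall fun q => hnorm q)
      _ = ∑ i : Fin p, ∫ q : (EuclideanSpace ℝ (Fin p)) × (EuclideanSpace ℝ (Fin p)), (q.1 i - q.2 i) ^ 2 ∂(μ.prod μ) :=
          integral_finset_sum _ fun i _ => hprod_coord i
      _ = ∑ i : Fin p, 2 * ∫ x : (EuclideanSpace ℝ (Fin p)), (x i - m i) ^ 2 ∂μ :=
          Finset.sum_congr rfl fun i _ => hcoord2 i
      _ = 2 * ∑ i : Fin p, ∫ x : (EuclideanSpace ℝ (Fin p)), (x i - m i) ^ 2 ∂μ := by rw [Finset.mul_sum]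
  -- conclusion
  rw [hT2, hT3]
  have hgoal : ∑ i : Fin p, (∫ x : (EuclideanSpace ℝ (Fin p)), (x i - ∫ y : (EuclideanSpace ℝ (Fin p)), y i ∂μ) ^ 2 ∂μ)
      = ∑ i : Fin p, ∫ x : (EuclideanSpace ℝ (Fin p)), (x i - m i) ^ 2 ∂μ := rfl
  rw [hgoal]
  linarith [hT1le, hJensen, hT1eq]
end

section
/- Let X be a real-valued random variable with E(X^2) < \infty. Then (E|X-X'|)^2 \le (2/3) E|X-X'|^2, where X' is an independent copy of X. Equivalently, 3 \Delta^2(X) \le 4 \sigma^2(X). -/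
open MeasureTheory

noncomputable def kfun (x y : ℝ) : ℝ := if y < x then 1 else if y = x then 2⁻¹ else 0

lemma kfun_nonneg (x y : ℝ) : 0 ≤ kfun x y := by unfold kfun; split_ifs <;> norm_num

lemma kfun_le_one (x y : ℝ) : kfun x y ≤ 1 := by unfold kfun; split_ifs <;> norm_num

lemma kfun_add (x y : ℝ) : kfun x y + kfun y x = 1 := by
  unfold kfun
  rcases lt_trichotomy x y with h | h | h
  · rw [if_neg (lt_asymm h), if_neg h.ne', if_pos h]; norm_num
  · subst h; norm_num
  · rw [if_pos h, if_neg (lt_asymm h), if_neg h.ne']; norm_num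

lemma kfun_lt {x y : ℝ} (h : y < x) : kfun x y = 1 := by unfold kfun; rw [if_pos h]

lemma kfun_gt {x y : ℝ} (h : x < y) : kfun x y = 0 := by
  unfold kfun; rw [if_neg (lt_asymm h), if_neg h.ne']

lemma kfun_self (x : ℝ) : kfun x x = 2⁻¹ := by unfold kfun; simp

lemma kfun_sum_le (x y z : ℝ) :
    kfun x y * kfun x z + kfun y x * kfun y z + kfun z x * kfun z y ≤ 1 := by
  rcases lt_trichotomy x y with h1 | h1 | h1 <;>
  rcases lt_trichotomy x z with h2 | h2 | h2 <;>
  rcases lt_trichotomy y z with h3 | h3 | h3 <;>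
  simp_all [kfun_lt, kfun_gt, kfun_self, lt_asymm] <;> norm_num

lemma kfun_meas : Measurable (fun p : ℝ × ℝ => kfun p.1 p.2) := by
  unfold kfun
  exact Measurable.ite (measurableSet_lt measurable_snd measurable_fst) measurable_const
    (Measurable.ite (measurableSet_eq_fun measurable_snd measurable_fst) measurable_const
      measurable_const)

lemma kfun_meas_r (x : ℝ) : Measurable (fun y => kfun x y) :=
  kfun_meas.comp (measurable_const.prodMk measurable_id)

lemma kfun_meas_l (x : ℝ) : Measurable (fun y => kfun y x) :=
  kfun_meas.comp (measurable_id.prodMk measurable_const)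

lemma integrable_of_bdd {α : Type*} [MeasurableSpace α] {ν : Measure α} [IsFiniteMeasure ν]
    {f : α → ℝ} (hm : Measurable f) {C : ℝ} (h : ∀ a, |f a| ≤ C) : Integrable f ν :=
  (integrable_const C).mono' hm.aestronglyMeasurable (Filter.Eventually.of_forall
    (by simpa [Real.norm_eq_abs] using h))

noncomputable def Ftil (μ : Measure ℝ) (x : ℝ) : ℝ :=
  ((μ (Set.Iio x)).toReal + (μ (Set.Iic x)).toReal) / 2

section
variable (μ : Measure ℝ) [IsProbabilityMeasure μ]
set_option linter.unusedSectionVars false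

lemma Ftil_meas : Measurable (Ftil μ) := by
  have h1 : Monotone fun x => (μ (Set.Iio x)).toReal := fun a b hab =>
    ENNReal.toReal_mono (measure_ne_top μ _) (measure_mono (Set.Iio_subset_Iio hab))
  have h2 : Monotone fun x => (μ (Set.Iic x)).toReal := fun a b hab =>
    ENNReal.toReal_mono (measure_ne_top μ _) (measure_mono (Set.Iic_subset_Iic.mpr hab))
  exact (h1.measurable.add h2.measurable).div_const 2

lemma Ftil_nonneg (x : ℝ) : 0 ≤ Ftil μ x := by
  unfold Ftil; positivity

lemma Ftil_le_one (x : ℝ) : Ftil μ x ≤ 1 := by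
  unfold Ftil
  have h1 : (μ (Set.Iio x)).toReal ≤ 1 := by
    simpa using ENNReal.toReal_mono ENNReal.one_ne_top (prob_le_one (μ := μ) (s := Set.Iio x))
  have h2 : (μ (Set.Iic x)).toReal ≤ 1 := by
    simpa using ENNReal.toReal_mono ENNReal.one_ne_top (prob_le_one (μ := μ) (s := Set.Iic x))
  linarith

lemma Ftil_abs_le (x : ℝ) : |Ftil μ x| ≤ 1 :=
  abs_le.mpr ⟨by linarith [Ftil_nonneg μ x], Ftil_le_one μ x⟩

lemma integrable_kfun_r (x : ℝ) : Integrable (fun y => kfun x y) μ :=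
  integrable_of_bdd (kfun_meas_r x) (C := 1) fun y =>
    abs_le.mpr ⟨by linarith [kfun_nonneg x y], kfun_le_one x y⟩

lemma integrable_kfun_l (x : ℝ) : Integrable (fun y => kfun y x) μ :=
  integrable_of_bdd (kfun_meas_l x) (C := 1) fun y =>
    abs_le.mpr ⟨by linarith [kfun_nonneg y x], kfun_le_one y x⟩

lemma integral_kfun_r (x : ℝ) : ∫ y, kfun x y ∂μ = Ftil μ x := by
  have hpt : ∀ y, kfun x y =
      (Set.Iio x).indicator (fun _ => (1:ℝ)) y + ({x} : Set ℝ).indicator (fun _ => (2⁻¹:ℝ)) y := by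
    intro y
    unfold kfun
    rcases lt_trichotomy y x with h | h | h
    · simp [Set.indicator_of_mem, h, Set.mem_Iio, h.ne]
    · subst h; simp
    · simp [Set.indicator_of_notMem, h.ne', not_lt.mpr h.le, lt_asymm h]
  rw [integral_congr_ae (Filter.Eventually.of_forall hpt)]
  rw [integral_add ((integrable_const (1:ℝ)).indicator measurableSet_Iio)
    ((integrable_const (2⁻¹:ℝ)).indicator (measurableSet_singleton x))]
  rw [integral_indicator_const _ measurableSet_Iio, integral_indicator_const _
    (measurableSet_singleton x)]
  have hIic : μ (Set.Iic x) = μ (Set.Iio x) + μ {x} := by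
    rw [← Set.Iio_union_right, measure_union (by simp) (measurableSet_singleton x)]
  unfold Ftil
  rw [hIic, ENNReal.toReal_add (measure_ne_top μ _) (measure_ne_top μ _)]
  simp only [smul_eq_mul, measureReal_def]
  ring

lemma integral_kfun_l (x : ℝ) : ∫ y, kfun y x ∂μ = 1 - Ftil μ x := by
  have hpt : ∀ y, kfun y x = 1 - kfun x y := fun y => by linarith [kfun_add x y]
  rw [integral_congr_ae (Filter.Eventually.of_forall hpt),
    integral_sub (integrable_const 1) (integrable_kfun_r μ x), integral_kfun_r]
  simp

lemma integrable_Ftil : Integrable (Ftil μ) μ :=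
  integrable_of_bdd (Ftil_meas μ) (C := 1) (Ftil_abs_le μ)

lemma integrable_kprod : Integrable (fun q : ℝ × ℝ => kfun q.1 q.2) (μ.prod μ) :=
  integrable_of_bdd kfun_meas (C := 1) fun q =>
    abs_le.mpr ⟨by linarith [kfun_nonneg q.1 q.2], kfun_le_one q.1 q.2⟩

lemma integral_Ftil : ∫ x, Ftil μ x ∂μ = 1 / 2 := by
  have h1 : ∫ q : ℝ × ℝ, kfun q.1 q.2 ∂(μ.prod μ) = ∫ x, Ftil μ x ∂μ := by
    rw [integral_prod _ (integrable_kprod μ)]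
    simp only [integral_kfun_r]
  have h2 : ∫ q : ℝ × ℝ, kfun q.2 q.1 ∂(μ.prod μ) = ∫ q : ℝ × ℝ, kfun q.1 q.2 ∂(μ.prod μ) := by
    rw [← integral_prod_swap (fun q : ℝ × ℝ => kfun q.2 q.1)]
    rfl
  have h3 : ∫ q : ℝ × ℝ, (kfun q.1 q.2 + kfun q.2 q.1) ∂(μ.prod μ) = 1 := by
    simp only [kfun_add]
    simp
  have hms : Measurable (fun q : ℝ × ℝ => kfun q.2 q.1) := kfun_meas.comp measurable_swap
  rw [integral_add (integrable_kprod μ)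
    (integrable_of_bdd hms (C := 1) fun q =>
      abs_le.mpr ⟨by linarith [kfun_nonneg q.2 q.1], kfun_le_one q.2 q.1⟩)] at h3
  linarith [h1, h2, h3]

lemma aux01 {a b : ℝ} (ha0 : 0 ≤ a) (ha1 : a ≤ 1) (hb0 : 0 ≤ b) (hb1 : b ≤ 1) : |a * b| ≤ 1 := by
  rw [abs_of_nonneg (mul_nonneg ha0 hb0)]; nlinarith

lemma integral_swap_aux :
    ∫ x, ∫ a, kfun a x * Ftil μ a ∂μ ∂μ = ∫ a, Ftil μ a ^ 2 ∂μ := by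
  have hm : Measurable (fun q : ℝ × ℝ => kfun q.2 q.1 * Ftil μ q.2) :=
    (kfun_meas.comp measurable_swap).mul ((Ftil_meas μ).comp measurable_snd)
  have hint : Integrable (fun q : ℝ × ℝ => kfun q.2 q.1 * Ftil μ q.2) (μ.prod μ) :=
    integrable_of_bdd hm (C := 1) fun q =>
      aux01 (kfun_nonneg _ _) (kfun_le_one _ _) (Ftil_nonneg μ _) (Ftil_le_one μ _)
  rw [integral_integral_swap (f := fun x a => kfun a x * Ftil μ a) hint]
  have h : ∀ a, ∫ x, kfun a x * Ftil μ a ∂μ = Ftil μ a ^ 2 := fun a => by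
    rw [integral_mul_const, integral_kfun_r]; ring
  simp only [h]

lemma integral_Ftil_sq_le : ∫ x, Ftil μ x ^ 2 ∂μ ≤ 1 / 3 := by
  have ma : Measurable (fun p : ℝ × ℝ × ℝ => p.1) := measurable_fst
  have mb : Measurable (fun p : ℝ × ℝ × ℝ => p.2.1) := measurable_fst.comp measurable_snd
  have mc : Measurable (fun p : ℝ × ℝ × ℝ => p.2.2) := measurable_snd.comp measurable_snd
  have m1 : Measurable (fun p : ℝ × ℝ × ℝ => kfun p.1 p.2.1 * kfun p.1 p.2.2) :=
    (kfun_meas.comp (ma.prodMk mb)).mul (kfun_meas.comp (ma.prodMk mc))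
  have m2 : Measurable (fun p : ℝ × ℝ × ℝ => kfun p.2.1 p.1 * kfun p.2.1 p.2.2) :=
    (kfun_meas.comp (mb.prodMk ma)).mul (kfun_meas.comp (mb.prodMk mc))
  have m3 : Measurable (fun p : ℝ × ℝ × ℝ => kfun p.2.2 p.1 * kfun p.2.2 p.2.1) :=
    (kfun_meas.comp (mc.prodMk ma)).mul (kfun_meas.comp (mc.prodMk mb))
  have bd : ∀ (a b : ℝ), |kfun a b * kfun a b| ≤ 1 := fun a b =>
    aux01 (kfun_nonneg _ _) (kfun_le_one _ _) (kfun_nonneg _ _) (kfun_le_one _ _)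
  have bd2 : ∀ (a b c d : ℝ), |kfun a b * kfun c d| ≤ 1 := fun a b c d =>
    aux01 (kfun_nonneg _ _) (kfun_le_one _ _) (kfun_nonneg _ _) (kfun_le_one _ _)
  have hint1 : Integrable (fun p : ℝ × ℝ × ℝ => kfun p.1 p.2.1 * kfun p.1 p.2.2)
      (μ.prod (μ.prod μ)) := integrable_of_bdd m1 (C := 1) fun p => bd2 _ _ _ _
  have hint2 : Integrable (fun p : ℝ × ℝ × ℝ => kfun p.2.1 p.1 * kfun p.2.1 p.2.2)
      (μ.prod (μ.prod μ)) := integrable_of_bdd m2 (C := 1) fun p => bd2 _ _ _ _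
  have hint3 : Integrable (fun p : ℝ × ℝ × ℝ => kfun p.2.2 p.1 * kfun p.2.2 p.2.1)
      (μ.prod (μ.prod μ)) := integrable_of_bdd m3 (C := 1) fun p => bd2 _ _ _ _
  have hT1 : ∫ p : ℝ × ℝ × ℝ, kfun p.1 p.2.1 * kfun p.1 p.2.2 ∂(μ.prod (μ.prod μ))
      = ∫ x, Ftil μ x ^ 2 ∂μ := by
    rw [integral_prod _ hint1]
    have h : ∀ x, ∫ w : ℝ × ℝ, kfun x w.1 * kfun x w.2 ∂(μ.prod μ) = Ftil μ x ^ 2 := fun x => by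
      rw [integral_prod_mul (f := fun y => kfun x y) (g := fun z => kfun x z), integral_kfun_r]
      ring
    simp only [h]
  have hT2 : ∫ p : ℝ × ℝ × ℝ, kfun p.2.1 p.1 * kfun p.2.1 p.2.2 ∂(μ.prod (μ.prod μ))
      = ∫ x, Ftil μ x ^ 2 ∂μ := by
    rw [integral_prod _ hint2]
    have h : ∀ x, ∫ w : ℝ × ℝ, kfun w.1 x * kfun w.1 w.2 ∂(μ.prod μ)
        = ∫ a, kfun a x * Ftil μ a ∂μ := fun x => by
      have hmw : Measurable (fun w : ℝ × ℝ => kfun w.1 x * kfun w.1 w.2) :=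
        (kfun_meas.comp (measurable_fst.prodMk measurable_const)).mul
          (kfun_meas.comp (measurable_fst.prodMk measurable_snd))
      rw [integral_prod _ (integrable_of_bdd hmw (C := 1) fun w => bd2 _ _ _ _)]
      refine integral_congr_ae (Filter.Eventually.of_forall fun y => ?_)
      show ∫ z, kfun y x * kfun y z ∂μ = kfun y x * Ftil μ y
      rw [integral_const_mul, integral_kfun_r]
    simp only [h]
    exact integral_swap_aux μ
  have hT3 : ∫ p : ℝ × ℝ × ℝ, kfun p.2.2 p.1 * kfun p.2.2 p.2.1 ∂(μ.prod (μ.prod μ))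
      = ∫ x, Ftil μ x ^ 2 ∂μ := by
    rw [integral_prod _ hint3]
    have h : ∀ x, ∫ w : ℝ × ℝ, kfun w.2 x * kfun w.2 w.1 ∂(μ.prod μ)
        = ∫ a, kfun a x * Ftil μ a ∂μ := fun x => by
      have hmw : Measurable (fun w : ℝ × ℝ => kfun w.2 x * kfun w.2 w.1) :=
        (kfun_meas.comp (measurable_snd.prodMk measurable_const)).mul
          (kfun_meas.comp (measurable_snd.prodMk measurable_fst))
      rw [integral_prod_symm _ (integrable_of_bdd hmw (C := 1) fun w => bd2 _ _ _ _)]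
      refine integral_congr_ae (Filter.Eventually.of_forall fun z => ?_)
      show ∫ y, kfun z x * kfun z y ∂μ = kfun z x * Ftil μ z
      rw [integral_const_mul, integral_kfun_r]
    simp only [h]
    exact integral_swap_aux μ
  have hint12 : Integrable (fun p : ℝ × ℝ × ℝ => kfun p.1 p.2.1 * kfun p.1 p.2.2
      + kfun p.2.1 p.1 * kfun p.2.1 p.2.2) (μ.prod (μ.prod μ)) := hint1.add hint2
  have hsum : ∫ p : ℝ × ℝ × ℝ, (kfun p.1 p.2.1 * kfun p.1 p.2.2
      + kfun p.2.1 p.1 * kfun p.2.1 p.2.2 + kfun p.2.2 p.1 * kfun p.2.2 p.2.1)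
      ∂(μ.prod (μ.prod μ)) ≤ 1 := by
    calc ∫ p : ℝ × ℝ × ℝ, (kfun p.1 p.2.1 * kfun p.1 p.2.2
        + kfun p.2.1 p.1 * kfun p.2.1 p.2.2 + kfun p.2.2 p.1 * kfun p.2.2 p.2.1)
        ∂(μ.prod (μ.prod μ))
        ≤ ∫ _p : ℝ × ℝ × ℝ, (1:ℝ) ∂(μ.prod (μ.prod μ)) :=
          integral_mono ((hint1.add hint2).add hint3) (integrable_const 1)
            (fun p => kfun_sum_le _ _ _)
      _ = 1 := by simp
  rw [integral_add hint12 hint3, integral_add hint1 hint2, hT1, hT2, hT3] at hsum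
  linarith

lemma kfun_abs_le (a b : ℝ) : |kfun a b| ≤ 1 :=
  abs_le.mpr ⟨by linarith [kfun_nonneg a b], kfun_le_one a b⟩

lemma abs_sub_le' (a b : ℝ) : |a - b| ≤ |a| + |b| := by
  rw [sub_eq_add_neg]
  exact (abs_add_le a (-b)).trans_eq (by rw [abs_neg])

lemma integrable_x (h2 : Integrable (fun x => x ^ 2) μ) : Integrable (fun x : ℝ => x) μ := by
  have hb : Integrable (fun x : ℝ => (x ^ 2 + 1) / 2) μ :=
    (h2.add (integrable_const 1)).div_const 2
  refine hb.mono' measurable_id.aestronglyMeasurable (Filter.Eventually.of_forall fun x => ?_)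
  rw [Real.norm_eq_abs]
  exact abs_le.mpr ⟨by nlinarith [sq_nonneg (x + 1)], by nlinarith [sq_nonneg (x - 1)]⟩

lemma integrable_xFtil (h2 : Integrable (fun x => x ^ 2) μ) :
    Integrable (fun x => x * Ftil μ x) μ := by
  refine (integrable_x μ h2).norm.mono'
    ((measurable_id.mul (Ftil_meas μ)).aestronglyMeasurable)
    (Filter.Eventually.of_forall fun x => ?_)
  rw [Real.norm_eq_abs, Real.norm_eq_abs, abs_mul]
  calc |x| * |Ftil μ x| ≤ |x| * 1 :=
        mul_le_mul_of_nonneg_left (Ftil_abs_le μ x) (abs_nonneg x)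
    _ = |x| := mul_one _

lemma delta_eq (h2 : Integrable (fun x => x ^ 2) μ) :
    ∫ q : ℝ × ℝ, |q.1 - q.2| ∂(μ.prod μ)
      = 4 * ∫ x, x * Ftil μ x ∂μ - 2 * ∫ x, x ∂μ := by
  have hx := integrable_x μ h2
  have habs1 : Integrable (fun q : ℝ × ℝ => |q.1|) (μ.prod μ) := by
    simpa [Real.norm_eq_abs] using hx.norm.mul_prod (integrable_const (1:ℝ))
  have habs2 : Integrable (fun q : ℝ × ℝ => |q.2|) (μ.prod μ) := by
    simpa [Real.norm_eq_abs] using (integrable_const (1:ℝ)).mul_prod hx.norm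
  have hbnd : Integrable (fun q : ℝ × ℝ => |q.1| + |q.2|) (μ.prod μ) := habs1.add habs2
  have idom : ∀ {F : ℝ × ℝ → ℝ}, Measurable F → (∀ q, |F q| ≤ |q.1| + |q.2|) →
      Integrable F (μ.prod μ) := fun hm hb =>
    hbnd.mono' hm.aestronglyMeasurable
      (Filter.Eventually.of_forall fun q => by rw [Real.norm_eq_abs]; exact hb q)
  have kbd : ∀ (c : ℝ) (a b : ℝ), |c * kfun a b| ≤ |c| := fun c a b => by
    rw [abs_mul]
    calc |c| * |kfun a b| ≤ |c| * 1 :=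
          mul_le_mul_of_nonneg_left (kfun_abs_le a b) (abs_nonneg c)
      _ = |c| := mul_one _
  have hF1 : Integrable (fun q : ℝ × ℝ => (q.1 - q.2) * kfun q.1 q.2) (μ.prod μ) :=
    idom ((measurable_fst.sub measurable_snd).mul kfun_meas)
      (fun q => (kbd _ _ _).trans (abs_sub_le' _ _))
  have hF2 : Integrable (fun q : ℝ × ℝ => (q.1 - q.2) * kfun q.2 q.1) (μ.prod μ) :=
    idom ((measurable_fst.sub measurable_snd).mul (kfun_meas.comp measurable_swap))
      (fun q => (kbd _ _ _).trans (abs_sub_le' _ _))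
  have hg1 : Integrable (fun q : ℝ × ℝ => q.1 * kfun q.1 q.2) (μ.prod μ) :=
    idom (measurable_fst.mul kfun_meas)
      (fun q => (kbd _ _ _).trans (le_add_of_nonneg_right (abs_nonneg _)))
  have hg2 : Integrable (fun q : ℝ × ℝ => q.2 * kfun q.1 q.2) (μ.prod μ) :=
    idom (measurable_snd.mul kfun_meas)
      (fun q => (kbd _ _ _).trans (le_add_of_nonneg_left (abs_nonneg _)))
  have hg2' : Integrable (fun q : ℝ × ℝ => q.1 * kfun q.2 q.1) (μ.prod μ) :=
    idom (measurable_fst.mul (kfun_meas.comp measurable_swap))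
      (fun q => (kbd _ _ _).trans (le_add_of_nonneg_right (abs_nonneg _)))
  have hpt : ∀ q : ℝ × ℝ,
      |q.1 - q.2| = (q.1 - q.2) * kfun q.1 q.2 - (q.1 - q.2) * kfun q.2 q.1 := by
    intro q
    rcases lt_trichotomy q.1 q.2 with h | h | h
    · rw [kfun_gt h, kfun_lt h, abs_of_nonpos (by linarith)]; ring
    · rw [h]; simp
    · rw [kfun_lt h, kfun_gt h, abs_of_nonneg (by linarith)]; ring
  rw [integral_congr_ae (Filter.Eventually.of_forall hpt), integral_sub hF1 hF2]
  have hswap : ∫ q : ℝ × ℝ, (q.1 - q.2) * kfun q.2 q.1 ∂(μ.prod μ)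
      = - ∫ q : ℝ × ℝ, (q.1 - q.2) * kfun q.1 q.2 ∂(μ.prod μ) := by
    rw [← integral_prod_swap (fun q : ℝ × ℝ => (q.1 - q.2) * kfun q.2 q.1)]
    have hz : ∀ z : ℝ × ℝ, (z.swap.1 - z.swap.2) * kfun z.swap.2 z.swap.1
        = -((z.1 - z.2) * kfun z.1 z.2) := fun z => by
      show (z.2 - z.1) * kfun z.1 z.2 = -((z.1 - z.2) * kfun z.1 z.2); ring
    rw [integral_congr_ae (Filter.Eventually.of_forall hz), integral_neg]
  have hsplit : ∫ q : ℝ × ℝ, (q.1 - q.2) * kfun q.1 q.2 ∂(μ.prod μ)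
      = (∫ q : ℝ × ℝ, q.1 * kfun q.1 q.2 ∂(μ.prod μ))
        - ∫ q : ℝ × ℝ, q.2 * kfun q.1 q.2 ∂(μ.prod μ) := by
    rw [← integral_sub hg1 hg2]
    exact integral_congr_ae (Filter.Eventually.of_forall fun q => by ring)
  have hg1val : ∫ q : ℝ × ℝ, q.1 * kfun q.1 q.2 ∂(μ.prod μ) = ∫ x, x * Ftil μ x ∂μ := by
    rw [integral_prod _ hg1]
    refine integral_congr_ae (Filter.Eventually.of_forall fun x => ?_)
    show ∫ y, x * kfun x y ∂μ = x * Ftil μ x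
    rw [integral_const_mul, integral_kfun_r]
  have hg2val : ∫ q : ℝ × ℝ, q.2 * kfun q.1 q.2 ∂(μ.prod μ)
      = (∫ x, x ∂μ) - ∫ x, x * Ftil μ x ∂μ := by
    have h := integral_prod_swap (μ := μ) (ν := μ) (fun q : ℝ × ℝ => q.2 * kfun q.1 q.2)
    rw [← h]
    have hz : ∀ z : ℝ × ℝ, z.swap.2 * kfun z.swap.1 z.swap.2 = z.1 * kfun z.2 z.1 :=
      fun z => rfl
    rw [integral_congr_ae (Filter.Eventually.of_forall hz), integral_prod _ hg2']
    have hinner : ∀ x : ℝ, (∫ y, x * kfun y x ∂μ) = x - x * Ftil μ x := fun x => by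
      rw [integral_const_mul, integral_kfun_l]; ring
    calc ∫ x, ∫ y, ((x, y).1 * kfun (x, y).2 (x, y).1) ∂μ ∂μ
        = ∫ x, (x - x * Ftil μ x) ∂μ :=
          integral_congr_ae (Filter.Eventually.of_forall fun x => hinner x)
      _ = (∫ x, x ∂μ) - ∫ x, x * Ftil μ x ∂μ :=
          integral_sub hx (integrable_xFtil μ h2)
  rw [hswap, hsplit, hg1val, hg2val]
  ring

lemma cauchy_schwarz_int {f g : ℝ → ℝ} (hf2 : Integrable (fun x => f x ^ 2) μ)
    (hg2 : Integrable (fun x => g x ^ 2) μ) (hfg : Integrable (fun x => f x * g x) μ) :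
    (∫ x, f x * g x ∂μ) ^ 2 ≤ (∫ x, f x ^ 2 ∂μ) * ∫ x, g x ^ 2 ∂μ := by
  set A := ∫ x, f x ^ 2 ∂μ with hA
  set B := ∫ x, f x * g x ∂μ with hB
  set C := ∫ x, g x ^ 2 ∂μ with hC
  have key : ∀ t : ℝ, 0 ≤ A * (t * t) + (2 * B) * t + C := by
    intro t
    have h0 : 0 ≤ ∫ x, (t * f x + g x) ^ 2 ∂μ := integral_nonneg fun x => sq_nonneg _
    have hexp : ∫ x, (t * f x + g x) ^ 2 ∂μ = A * (t * t) + (2 * B) * t + C := by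
      have hpt : ∀ x, (t * f x + g x) ^ 2
          = (t * t) * f x ^ 2 + ((2 * t) * (f x * g x) + g x ^ 2) := fun x => by ring
      have hadd : Integrable (fun x => (2 * t) * (f x * g x) + g x ^ 2) μ :=
        (hfg.const_mul _).add hg2
      rw [integral_congr_ae (Filter.Eventually.of_forall hpt),
        integral_add (hf2.const_mul _) hadd,
        integral_add (hfg.const_mul _) hg2, integral_const_mul, integral_const_mul]
      ring
    linarith [hexp ▸ h0]
  have hd := discrim_le_zero key
  rw [discrim] at hd
  nlinarith [hd]

end

/-- For a real random variable `X` with law `μ` and `E(X²) < ∞`, Gini's mean difference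
`Δ(X) = E|X-X'|` satisfies `Δ(X)² ≤ (2/3) E|X-X'|²`; equivalently `3Δ²(X) ≤ 4σ²(X)`. -/
theorem gini_sq_le_twothirds_T1 (μ : Measure ℝ) [IsProbabilityMeasure μ]
    (h2 : Integrable (fun x => x ^ 2) μ) :
    (∫ q, |q.1 - q.2| ∂(μ.prod μ)) ^ 2 ≤ (2 / 3) * ∫ q, (q.1 - q.2) ^ 2 ∂(μ.prod μ) ∧
      3 * (∫ q, |q.1 - q.2| ∂(μ.prod μ)) ^ 2 ≤
        4 * ∫ x, (x - ∫ y, y ∂μ) ^ 2 ∂μ := by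
  set m := ∫ y, y ∂μ with hm
  set A := ∫ x, x * Ftil μ x ∂μ with hA
  have hx := integrable_x μ h2
  have hxF := integrable_xFtil μ h2
  have hFint := integrable_Ftil μ
  have hFsq : Integrable (fun x => Ftil μ x ^ 2) μ :=
    integrable_of_bdd ((Ftil_meas μ).pow_const 2) (C := 1) fun x => by
      rw [abs_of_nonneg (sq_nonneg _)]
      nlinarith [Ftil_nonneg μ x, Ftil_le_one μ x]
  have hfsq : Integrable (fun x => (x - m) ^ 2) μ := by
    have he : (fun x : ℝ => (x - m) ^ 2) = fun x => x ^ 2 - (2 * m) * x + m ^ 2 :=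
      funext fun x => by ring
    rw [he]
    exact (h2.sub (hx.const_mul _)).add (integrable_const _)
  have hgsq : Integrable (fun x => (Ftil μ x - 2⁻¹) ^ 2) μ :=
    integrable_of_bdd (((Ftil_meas μ).sub measurable_const).pow_const 2) (C := 1) fun x => by
      rw [abs_of_nonneg (sq_nonneg _)]
      nlinarith [Ftil_nonneg μ x, Ftil_le_one μ x]
  have hfg : Integrable (fun x => (x - m) * (Ftil μ x - 2⁻¹)) μ := by
    refine (hx.norm.add (integrable_const |m|)).mono'
      (((measurable_id.sub measurable_const).mul
        ((Ftil_meas μ).sub measurable_const)).aestronglyMeasurable)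
      (Filter.Eventually.of_forall fun x => ?_)
    simp only [Real.norm_eq_abs]
    rw [abs_mul]
    have h1 : |Ftil μ x - 2⁻¹| ≤ 1 :=
      abs_le.mpr ⟨by linarith [Ftil_nonneg μ x], by linarith [Ftil_le_one μ x]⟩
    calc |x - m| * |Ftil μ x - 2⁻¹| ≤ |x - m| * 1 :=
          mul_le_mul_of_nonneg_left h1 (abs_nonneg _)
      _ = |x - m| := mul_one _
      _ ≤ |x| + |m| := abs_sub_le' x m
  have hB : ∫ x, (x - m) * (Ftil μ x - 2⁻¹) ∂μ = A - m / 2 := by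
    have hpt : ∀ x, (x - m) * (Ftil μ x - 2⁻¹)
        = (x * Ftil μ x - 2⁻¹ * x - m * Ftil μ x) + m * 2⁻¹ := fun x => by ring
    have hi1 : Integrable (fun x => x * Ftil μ x - 2⁻¹ * x - m * Ftil μ x) μ :=
      (hxF.sub (hx.const_mul _)).sub (hFint.const_mul _)
    have hi2 : Integrable (fun x => x * Ftil μ x - 2⁻¹ * x) μ := hxF.sub (hx.const_mul _)
    rw [integral_congr_ae (Filter.Eventually.of_forall hpt),
      integral_add hi1 (integrable_const _), integral_sub hi2 (hFint.const_mul _),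
      integral_sub hxF (hx.const_mul _), integral_const_mul, integral_const_mul,
      integral_const, integral_Ftil, ← hm, ← hA]
    simp
    ring
  have hW : ∫ x, (Ftil μ x - 2⁻¹) ^ 2 ∂μ ≤ 1 / 12 := by
    have hpt : ∀ x, (Ftil μ x - 2⁻¹) ^ 2 = (Ftil μ x ^ 2 - Ftil μ x) + 4⁻¹ := fun x => by ring
    have hi : Integrable (fun x => Ftil μ x ^ 2 - Ftil μ x) μ := hFsq.sub hFint
    rw [integral_congr_ae (Filter.Eventually.of_forall hpt),
      integral_add hi (integrable_const _), integral_sub hFsq hFint,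
      integral_const, integral_Ftil]
    have h3 := integral_Ftil_sq_le μ
    simp only [measureReal_def, measure_univ, ENNReal.toReal_one, smul_eq_mul, one_mul]
    linarith
  have hV0 : 0 ≤ ∫ x, (x - m) ^ 2 ∂μ := integral_nonneg fun x => sq_nonneg _
  have hCS := cauchy_schwarz_int μ (f := fun x => x - m) (g := fun x => Ftil μ x - 2⁻¹)
    hfsq hgsq hfg
  have hBV : (A - m / 2) ^ 2 ≤ (∫ x, (x - m) ^ 2 ∂μ) * (1 / 12) := by
    rw [← hB]
    exact hCS.trans (mul_le_mul_of_nonneg_left hW hV0)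
  have hDval : ∫ q : ℝ × ℝ, |q.1 - q.2| ∂(μ.prod μ) = 4 * A - 2 * m := by
    rw [delta_eq μ h2, ← hm, ← hA]
  have hV : ∫ x, (x - m) ^ 2 ∂μ = (∫ x, x ^ 2 ∂μ) - m ^ 2 := by
    have hpt : ∀ x : ℝ, (x - m) ^ 2 = (x ^ 2 - (2 * m) * x) + m ^ 2 := fun x => by ring
    have hi : Integrable (fun x : ℝ => x ^ 2 - (2 * m) * x) μ := h2.sub (hx.const_mul _)
    rw [integral_congr_ae (Filter.Eventually.of_forall hpt),
      integral_add hi (integrable_const _),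
      integral_sub h2 (hx.const_mul _), integral_const_mul, integral_const, ← hm]
    simp
    ring
  have hq1sq : Integrable (fun q : ℝ × ℝ => q.1 ^ 2) (μ.prod μ) := by
    simpa using h2.mul_prod (integrable_const (1 : ℝ))
  have hq2sq : Integrable (fun q : ℝ × ℝ => q.2 ^ 2) (μ.prod μ) := by
    simpa using (integrable_const (1 : ℝ)).mul_prod h2
  have hq12 : Integrable (fun q : ℝ × ℝ => q.1 * q.2) (μ.prod μ) := hx.mul_prod hx
  have e1 : ∫ q : ℝ × ℝ, q.1 ^ 2 ∂(μ.prod μ) = ∫ x, x ^ 2 ∂μ := by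
    rw [integral_prod _ hq1sq]
    refine integral_congr_ae (Filter.Eventually.of_forall fun x => ?_)
    show (∫ _y, x ^ 2 ∂μ) = x ^ 2
    simp
  have e2 : ∫ q : ℝ × ℝ, q.2 ^ 2 ∂(μ.prod μ) = ∫ x, x ^ 2 ∂μ := by
    rw [integral_prod _ hq2sq]
    have hz : ∀ x : ℝ, (∫ y, ((x, y).2) ^ 2 ∂μ) = ∫ y, y ^ 2 ∂μ := fun x => rfl
    rw [integral_congr_ae (Filter.Eventually.of_forall hz)]
    simp
  have e3 : ∫ q : ℝ × ℝ, q.1 * q.2 ∂(μ.prod μ) = m * m := by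
    have h := integral_prod_mul (μ := μ) (ν := μ) (fun x : ℝ => x) (fun x : ℝ => x)
    rw [hm]
    exact h
  have hprod : ∫ q : ℝ × ℝ, (q.1 - q.2) ^ 2 ∂(μ.prod μ) = 2 * ∫ x, (x - m) ^ 2 ∂μ := by
    have hpt2 : ∀ q : ℝ × ℝ, (q.1 - q.2) ^ 2 = (q.1 ^ 2 - 2 * (q.1 * q.2)) + q.2 ^ 2 :=
      fun q => by ring
    have hi1 : Integrable (fun q : ℝ × ℝ => q.1 ^ 2 - 2 * (q.1 * q.2)) (μ.prod μ) :=
      hq1sq.sub (hq12.const_mul 2)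
    rw [integral_congr_ae (Filter.Eventually.of_forall hpt2),
      integral_add hi1 hq2sq, integral_sub hq1sq (hq12.const_mul 2), integral_const_mul,
      e1, e2, e3, hV]
    ring
  constructor
  · rw [hDval, hprod]
    nlinarith [hBV]
  · rw [hDval]
    nlinarith [hBV]
end

section
/- Let X be exponentially distributed with rate \lambda > 0. Then the distance variance V^2(X) = 1/(3\lambda^2). -/
open MeasureTheory

/-- The characteristic function of a law `μ` on `ℝ`. -/
noncomputable def charF (μ : Measure ℝ) (t : ℝ) : ℂ :=
  ∫ x, Complex.exp ((t * x : ℝ) * Complex.I) ∂μ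

/-- The distance variance of a real random variable with law `μ`, defined via the
characteristic-function integral `V²(X) = π⁻² ∬ |f(s+t) - f(s)f(t)|² / (s²t²) ds dt`. -/
noncomputable def distVar (μ : Measure ℝ) : ℝ :=
  (1 / Real.pi ^ 2) *
    ∫ q : ℝ × ℝ, ‖charF μ (q.1 + q.2) - charF μ q.1 * charF μ q.2‖ ^ 2 / (q.1 ^ 2 * q.2 ^ 2)

set_option maxHeartbeats 1000000

open Real Set Filter Topology
open scoped ENNReal NNReal

lemma contD (a : ℝ) (ha : 0 < a) : Continuous (fun x : ℝ => (a^2 + x^2)⁻¹) :=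
  (continuous_const.add (continuous_id.pow 2)).inv₀ fun x => by dsimp; positivity

lemma integrable_inv_sq_add (a : ℝ) (ha : 0 < a) :
    Integrable (fun x : ℝ => (a^2 + x^2)⁻¹) := by
  set m := min (a^2) 1 with hm
  have hmpos : 0 < m := lt_min (by positivity) one_pos
  refine Integrable.mono' (integrable_inv_one_add_sq.const_mul m⁻¹)
    (contD a ha).aestronglyMeasurable ?_
  filter_upwards with x
  rw [Real.norm_eq_abs, abs_of_nonneg (by positivity)]
  have h1 : m * (1 + x^2) ≤ a^2 + x^2 := by
    have := min_le_left (a^2) 1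
    have := min_le_right (a^2) 1
    nlinarith [sq_nonneg x]
  have h2 : (a^2 + x^2)⁻¹ ≤ (m * (1 + x^2))⁻¹ :=
    inv_anti₀ (by positivity) h1
  rwa [mul_inv] at h2

lemma integral_inv_sq_add (a : ℝ) (ha : 0 < a) :
    ∫ x : ℝ, (a^2 + x^2)⁻¹ = π / a := by
  have ha' : a ≠ 0 := ne_of_gt ha
  have hderiv : ∀ x : ℝ, HasDerivAt (fun x : ℝ => a⁻¹ * arctan (x / a))
      ((a^2 + x^2)⁻¹) x := by
    intro x
    have h1 : HasDerivAt (fun x : ℝ => x / a) (1/a) x := by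
      simpa using (hasDerivAt_id x).div_const a
    have h2 := (Real.hasDerivAt_arctan (x / a)).comp x h1
    have h3 := h2.const_mul a⁻¹
    refine h3.congr_deriv (Eq.symm ?_)
    field_simp
  have htop : Tendsto (fun x : ℝ => a⁻¹ * arctan (x / a)) atTop (𝓝 (a⁻¹ * (π/2))) := by
    refine Tendsto.const_mul _ ?_
    have : Tendsto (fun x : ℝ => x / a) atTop atTop := tendsto_id.atTop_div_const ha
    exact (tendsto_nhds_of_tendsto_nhdsWithin tendsto_arctan_atTop).comp this
  have hbot : Tendsto (fun x : ℝ => a⁻¹ * arctan (x / a)) atBot (𝓝 (a⁻¹ * (-(π/2)))) := by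
    refine Tendsto.const_mul _ ?_
    have : Tendsto (fun x : ℝ => x / a) atBot atBot := tendsto_id.atBot_div_const ha
    exact (tendsto_nhds_of_tendsto_nhdsWithin tendsto_arctan_atBot).comp this
  have := MeasureTheory.integral_of_hasDerivAt_of_tendsto hderiv
    (integrable_inv_sq_add a ha) hbot htop
  rw [this]
  field_simp
  ring

lemma integrable_inner (a s : ℝ) (ha : 0 < a) :
    Integrable (fun t : ℝ => ((a^2 + t^2) * (a^2 + (s+t)^2))⁻¹) := by
  refine Integrable.mono' ((integrable_inv_sq_add a ha).const_mul (a^2)⁻¹)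
    ?_ ?_
  · exact (((continuous_const.add (continuous_id.pow 2)).mul
      ((continuous_const.add ((continuous_const.add continuous_id).pow 2)))).inv₀
      (fun t => by dsimp; positivity)).aestronglyMeasurable
  · filter_upwards with t
    rw [Real.norm_eq_abs, abs_of_nonneg (by positivity), mul_inv]
    have h1 : (a^2+(s+t)^2)⁻¹ ≤ (a^2)⁻¹ := by
      apply inv_anti₀ (by positivity)
      nlinarith [sq_nonneg (s+t)]
    calc (a^2+t^2)⁻¹ * (a^2+(s+t)^2)⁻¹ ≤ (a^2+t^2)⁻¹ * (a^2)⁻¹ :=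
          mul_le_mul_of_nonneg_left h1 (by positivity)
      _ = (a^2)⁻¹ * (a^2+t^2)⁻¹ := mul_comm _ _

lemma inner_int (a s : ℝ) (ha : 0 < a) (hs : s ≠ 0) :
    ∫ t : ℝ, ((a^2 + t^2) * (a^2 + (s+t)^2))⁻¹ = 2 * π / (a * (s^2 + 4*a^2)) := by
  have ha' : a ≠ 0 := ne_of_gt ha
  set c : ℝ := (s^2 + 4*a^2)⁻¹ with hc
  set F : ℝ → ℝ := fun t => c * ((-s⁻¹) * (Real.log (a^2+t^2) - Real.log (a^2+(s+t)^2))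
      + a⁻¹ * (arctan (t/a) + arctan ((s+t)/a))) with hF
  have hderiv : ∀ t : ℝ, HasDerivAt F (((a^2 + t^2) * (a^2 + (s+t)^2))⁻¹) t := by
    intro t
    have hp1 : (0:ℝ) < a^2 + t^2 := by positivity
    have hp2 : (0:ℝ) < a^2 + (s+t)^2 := by positivity
    have d1 : HasDerivAt (fun t : ℝ => Real.log (a^2+t^2)) (2*t/(a^2+t^2)) t := by
      have h := (Real.hasDerivAt_log (ne_of_gt hp1)).comp t
        ((hasDerivAt_pow 2 t).const_add (a^2))
      refine h.congr_deriv (Eq.symm ?_)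
      simp
      ring
    have d2 : HasDerivAt (fun t : ℝ => Real.log (a^2+(s+t)^2)) (2*(s+t)/(a^2+(s+t)^2)) t := by
      have hin : HasDerivAt (fun t : ℝ => a^2 + (s+t)^2) (2*(s+t)) t := by
        have h := (((hasDerivAt_id t).const_add s).pow 2).const_add (a^2)
        refine h.congr_deriv (Eq.symm ?_)
        simp
      have h := (Real.hasDerivAt_log (ne_of_gt hp2)).comp t hin
      refine h.congr_deriv (Eq.symm ?_)
      ring
    have d3 : HasDerivAt (fun t : ℝ => arctan (t/a)) ((1+(t/a)^2)⁻¹ * a⁻¹) t := by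
      have h := (Real.hasDerivAt_arctan (t/a)).comp t ((hasDerivAt_id t).div_const a)
      refine h.congr_deriv (Eq.symm ?_)
      simp [one_div]
    have d4 : HasDerivAt (fun t : ℝ => arctan ((s+t)/a)) ((1+((s+t)/a)^2)⁻¹ * a⁻¹) t := by
      have hin : HasDerivAt (fun t : ℝ => (s+t)/a) (1/a) t := by
        simpa using ((hasDerivAt_id t).const_add s).div_const a
      have h := (Real.hasDerivAt_arctan ((s+t)/a)).comp t hin
      refine h.congr_deriv (Eq.symm ?_)
      simp [one_div]
    have h := (((d1.sub d2).const_mul (-s⁻¹)).add ((d3.add d4).const_mul a⁻¹)).const_mul c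
    refine h.congr_deriv (Eq.symm ?_)
    rw [hc]
    field_simp
    ring
  have harct : ∀ b : ℝ, b ≠ 0 → True := fun _ _ => trivial
  -- limit of the log-ratio term at ±∞
  have hlog : ∀ (l : Filter ℝ), l = atTop ∨ l = atBot →
      Tendsto (fun t : ℝ => Real.log (a^2+t^2) - Real.log (a^2+(s+t)^2)) l (𝓝 0) := by
    intro l hl
    have hg : Tendsto (fun u : ℝ => (a^2*u^2+1)/(a^2*u^2+(s*u+1)^2)) (𝓝 0) (𝓝 1) := by
      have h1 : ContinuousAt (fun u : ℝ => (a^2*u^2+1)/(a^2*u^2+(s*u+1)^2)) 0 := by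
        apply ContinuousAt.div
        · fun_prop
        · fun_prop
        · norm_num
      simpa using h1.tendsto
    have hinv : Tendsto (fun t : ℝ => t⁻¹) l (𝓝 0) := by
      rcases hl with rfl | rfl
      · exact tendsto_inv_atTop_zero
      · have h1 : Tendsto (fun t : ℝ => -t) atBot atTop := tendsto_neg_atBot_atTop
        have h2 : Tendsto (fun t : ℝ => (-t)⁻¹) atBot (𝓝 0) := tendsto_inv_atTop_zero.comp h1
        have h3 := h2.neg
        rw [neg_zero] at h3
        refine h3.congr fun t => ?_
        rw [inv_neg, neg_neg]
    have hratio : Tendsto (fun t : ℝ => (a^2+t^2)/(a^2+(s+t)^2)) l (𝓝 1) := by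
      refine (hg.comp hinv).congr' ?_
      have hne : ∀ᶠ t : ℝ in l, t ≠ 0 := by
        rcases hl with rfl | rfl
        · filter_upwards [eventually_gt_atTop 0] with t ht using ne_of_gt ht
        · filter_upwards [eventually_lt_atBot 0] with t ht using ne_of_lt ht
      filter_upwards [hne] with t ht
      have h2 : a^2+(s+t)^2 > 0 := by positivity
      simp only [Function.comp_apply]
      field_simp
    have hcont : ContinuousAt Real.log 1 := Real.continuousAt_log one_ne_zero
    have h := (hcont.tendsto.comp hratio)
    rw [Real.log_one] at h
    refine h.congr ?_
    intro t
    have h1 : a^2+t^2 ≠ 0 := by positivity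
    have h2 : a^2+(s+t)^2 ≠ 0 := by positivity
    simp [Function.comp, Real.log_div h1 h2]
  have harctop : ∀ (r : ℝ), Tendsto (fun t : ℝ => arctan ((r+t)/a)) atTop (𝓝 (π/2)) := by
    intro r
    have h1 : Tendsto (fun t : ℝ => (r+t)/a) atTop atTop :=
      (tendsto_atTop_add_const_left _ r tendsto_id).atTop_div_const ha
    exact (tendsto_nhds_of_tendsto_nhdsWithin tendsto_arctan_atTop).comp h1
  have harcbot : ∀ (r : ℝ), Tendsto (fun t : ℝ => arctan ((r+t)/a)) atBot (𝓝 (-(π/2))) := by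
    intro r
    have h1 : Tendsto (fun t : ℝ => (r+t)/a) atBot atBot :=
      (tendsto_atBot_add_const_left _ r tendsto_id).atBot_div_const ha
    exact (tendsto_nhds_of_tendsto_nhdsWithin tendsto_arctan_atBot).comp h1
  have htop : Tendsto F atTop (𝓝 (c * ((-s⁻¹) * 0 + a⁻¹ * (π/2 + π/2)))) := by
    refine Tendsto.const_mul c ?_
    refine Tendsto.add (Tendsto.const_mul _ (hlog atTop (Or.inl rfl))) (Tendsto.const_mul _ ?_)
    have h1 : Tendsto (fun t : ℝ => arctan (t/a)) atTop (𝓝 (π/2)) := by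
      simpa using harctop 0
    exact h1.add (harctop s)
  have hbot : Tendsto F atBot (𝓝 (c * ((-s⁻¹) * 0 + a⁻¹ * (-(π/2) + -(π/2))))) := by
    refine Tendsto.const_mul c ?_
    refine Tendsto.add (Tendsto.const_mul _ (hlog atBot (Or.inr rfl))) (Tendsto.const_mul _ ?_)
    have h1 : Tendsto (fun t : ℝ => arctan (t/a)) atBot (𝓝 (-(π/2))) := by
      simpa using harcbot 0
    exact h1.add (harcbot s)
  have := MeasureTheory.integral_of_hasDerivAt_of_tendsto hderiv
    (integrable_inner a s ha) hbot htop
  rw [this, hc]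
  have h4 : s^2 + 4*a^2 > 0 := by positivity
  field_simp
  ring

lemma charF_exp (l : ℝ) (hl : 0 < l) (t : ℝ) :
    charF (ProbabilityTheory.expMeasure l) t = l / (l - t * Complex.I) := by
  have hl' : l ≠ 0 := ne_of_gt hl
  set c : ℂ := t * Complex.I - l with hcdef
  have hc : c ≠ 0 := by
    intro h
    have := congrArg Complex.re h
    simp [hcdef] at this
    exact hl' this
  have hre : c.re = -l := by simp [hcdef]
  -- rewrite the integral against the withDensity measure
  have h1 : charF (ProbabilityTheory.expMeasure l) t
      = ∫ x : ℝ, (ProbabilityTheory.exponentialPDFReal l x).toNNReal •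
          Complex.exp ((t * x : ℝ) * Complex.I) := by
    rw [charF]
    rw [show ProbabilityTheory.expMeasure l
        = volume.withDensity (fun x => ((ProbabilityTheory.exponentialPDFReal l x).toNNReal : ℝ≥0∞))
      from rfl]
    exact integral_withDensity_eq_integral_smul
      ((ProbabilityTheory.measurable_exponentialPDFReal l).real_toNNReal) _
  rw [h1]
  have h2 : ∀ x : ℝ, (ProbabilityTheory.exponentialPDFReal l x).toNNReal •
        Complex.exp ((t * x : ℝ) * Complex.I)
      = Set.indicator (Ici 0) (fun x : ℝ => (l : ℂ) * Complex.exp (c * x)) x := by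
    intro x
    have hpdf : ProbabilityTheory.exponentialPDFReal l x
        = if 0 ≤ x then l * rexp (-(l * x)) else 0 := by
      rw [ProbabilityTheory.exponentialPDFReal, ProbabilityTheory.gammaPDFReal]
      simp only [rpow_one, Real.Gamma_one, div_one, sub_self, rpow_zero, mul_one]
    rw [NNReal.smul_def, hpdf]
    by_cases hx : 0 ≤ x
    · rw [if_pos hx, Set.indicator_of_mem (mem_Ici.2 hx)]
      rw [Real.coe_toNNReal _ (by positivity)]
      rw [Complex.real_smul]
      push_cast
      rw [mul_assoc, ← Complex.exp_add]
      congr 1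
      rw [hcdef]
      push_cast
      ring
    · rw [if_neg hx, Set.indicator_of_notMem (by simpa using hx)]
      simp
  rw [integral_congr_ae (Filter.Eventually.of_forall h2), integral_indicator measurableSet_Ici,
    integral_Ici_eq_integral_Ioi]
  -- now the improper integral
  have hderiv : ∀ x ∈ Ici (0:ℝ), HasDerivAt (fun x : ℝ => (l / c) * Complex.exp (c * x))
      ((l : ℂ) * Complex.exp (c * x)) x := by
    intro x _
    have h := (((hasDerivAt_id (x:ℂ)).const_mul c).cexp.comp_ofReal).const_mul ((l:ℂ) / c)
    refine h.congr_deriv (Eq.symm ?_)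
    field_simp
    rfl
  have hint : IntegrableOn (fun x : ℝ => (l : ℂ) * Complex.exp (c * x)) (Ioi 0) := by
    refine Integrable.mono' (((exp_neg_integrableOn_Ioi 0 hl).const_mul l))
      ?_ ?_
    · exact (Complex.continuous_exp.comp (continuous_const.mul Complex.continuous_ofReal)).const_smul
        (l : ℂ) |>.aestronglyMeasurable
    · filter_upwards with x
      have hcx : (c * (x:ℂ)).re = -l * x := by
        rw [Complex.mul_re]
        simp [hre]
      rw [norm_mul, Complex.norm_exp, hcx]
      simp only [Complex.norm_real, Real.norm_eq_abs]
      rw [abs_of_pos hl]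
  have htop : Tendsto (fun x : ℝ => (l / c) * Complex.exp (c * x)) atTop (𝓝 0) := by
    rw [tendsto_zero_iff_norm_tendsto_zero]
    have hnorm : ∀ x : ℝ, ‖(l / c) * Complex.exp (c * x)‖ = ‖(l:ℂ)/c‖ * rexp (-l * x) := by
      intro x
      rw [norm_mul, Complex.norm_exp]
      congr 2
      rw [Complex.mul_re]
      simp [hre]
    simp_rw [hnorm]
    rw [show (0:ℝ) = ‖(l:ℂ)/c‖ * 0 by ring]
    refine Tendsto.const_mul _ ?_
    have h := Real.tendsto_exp_neg_atTop_nhds_zero.comp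
      (tendsto_id.const_mul_atTop hl)
    refine h.congr fun x => ?_
    simp [Function.comp]
  have := integral_Ioi_of_hasDerivAt_of_tendsto' hderiv hint htop
  rw [this]
  simp only [Complex.ofReal_zero, mul_zero, Complex.exp_zero, mul_one]
  have hd : (l:ℂ) - t * Complex.I ≠ 0 := by
    rw [show (l:ℂ) - t * Complex.I = -c by rw [hcdef]; ring]
    exact neg_ne_zero.2 hc
  have hc' : (↑t * Complex.I - ↑l : ℂ) ≠ 0 := by rw [← hcdef]; exact hc
  rw [zero_sub, hcdef, ← neg_div, div_eq_div_iff hc' hd]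
  ring

lemma dne (l u : ℝ) (hl : l ≠ 0) : ((l:ℂ) - u * Complex.I) ≠ 0 := by
  intro h
  have := congrArg Complex.re h
  simp at this
  exact hl this

lemma nsq (l u : ℝ) : Complex.normSq ((l:ℂ) - u * Complex.I) = l^2 + u^2 := by
  simp [Complex.normSq_apply]
  ring

lemma ptwise (l : ℝ) (hl : 0 < l) (s t : ℝ) (hs : s ≠ 0) (ht : t ≠ 0) :
    ‖charF (ProbabilityTheory.expMeasure l) (s+t) - charF (ProbabilityTheory.expMeasure l) s *
      charF (ProbabilityTheory.expMeasure l) t‖^2 / (s^2 * t^2)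
    = l^2 / ((l^2+(s+t)^2) * ((l^2+s^2) * (l^2+t^2))) := by
  have hl' : l ≠ 0 := ne_of_gt hl
  have hA := dne l (s+t) hl'
  have hB := dne l s hl'
  have hC := dne l t hl'
  rw [charF_exp l hl, charF_exp l hl, charF_exp l hl]
  have hA' : ((l:ℂ) - ((s:ℂ)+(t:ℂ)) * Complex.I) ≠ 0 := by
    have := dne l (s+t) hl'
    push_cast at this
    exact this
  have h1 : (l:ℂ)/((l:ℂ) - ((s:ℂ)+(t:ℂ))*Complex.I)
        - (l:ℂ)/((l:ℂ)-(s:ℂ)*Complex.I) * ((l:ℂ)/((l:ℂ)-(t:ℂ)*Complex.I))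
      = ((-(l*s*t) : ℝ) : ℂ) / (((l:ℂ)-((s:ℂ)+(t:ℂ))*Complex.I) *
          (((l:ℂ)-(s:ℂ)*Complex.I) * ((l:ℂ)-(t:ℂ)*Complex.I))) := by
    rw [div_mul_div_comm, div_sub_div _ _ hA' (mul_ne_zero hB hC)]
    congr 1
    push_cast
    linear_combination ((l:ℂ)*s*t) * Complex.I_sq
  push_cast
  rw [h1]
  have h2 : ‖((-(l*s*t) : ℝ) : ℂ) / (((l:ℂ)-((s:ℂ)+(t:ℂ))*Complex.I) *
        (((l:ℂ)-(s:ℂ)*Complex.I) * ((l:ℂ)-(t:ℂ)*Complex.I)))‖^2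
      = (l*s*t)^2 / ((l^2+(s+t)^2) * ((l^2+s^2) * (l^2+t^2))) := by
    have e1 : ((l:ℂ)-((s:ℂ)+(t:ℂ))*Complex.I) = ((l:ℂ)-((s+t:ℝ):ℂ)*Complex.I) := by push_cast; ring
    rw [Complex.sq_norm, map_div₀, map_mul, map_mul, e1, nsq, nsq, nsq,
      Complex.normSq_ofReal]
    ring_nf
  rw [h2]
  have p1 : (0:ℝ) < l^2+(s+t)^2 := by positivity
  have p2 : (0:ℝ) < l^2+s^2 := by positivity
  have p3 : (0:ℝ) < l^2+t^2 := by positivity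
  field_simp

/-- For `X` exponentially distributed with rate `λ > 0`, the distance variance is
`1/(3λ²)`. -/
theorem distVar_exponential (l : ℝ) (hl : 0 < l) :
    distVar (ProbabilityTheory.expMeasure l) = 1 / (3 * l ^ 2) := by
  have hl' : l ≠ 0 := ne_of_gt hl
  set G : ℝ × ℝ → ℝ :=
    fun q => l^2 / ((l^2+(q.1+q.2)^2) * ((l^2+q.1^2) * (l^2+q.2^2))) with hG
  have hGcont : Continuous G := by
    apply Continuous.div continuous_const
    · fun_prop
    · intro q
      positivity
  have hGint : Integrable G := by
    refine Integrable.mono'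
      ((integrable_inv_sq_add l hl).mul_prod (integrable_inv_sq_add l hl))
      hGcont.aestronglyMeasurable ?_
    filter_upwards with q
    rw [Real.norm_eq_abs, abs_of_nonneg (by positivity), hG]
    dsimp only
    have p1 : (l^2+q.1^2) ≠ 0 := by positivity
    have p2 : (l^2+q.2^2) ≠ 0 := by positivity
    have heq : (l^2+q.1^2)⁻¹ * (l^2+q.2^2)⁻¹ *
        ((l^2+(q.1+q.2)^2) * ((l^2+q.1^2) * (l^2+q.2^2))) = l^2+(q.1+q.2)^2 := by
      field_simp
    rw [div_le_iff₀ (by positivity), heq]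
    nlinarith [sq_nonneg (q.1+q.2)]
  have h1 : ∀ᵐ q : ℝ×ℝ, q.1 ≠ 0 := by
    rw [ae_iff]
    simp only [ne_eq, not_not]
    have hset : {q : ℝ×ℝ | q.1 = 0} = ({0} : Set ℝ) ×ˢ (univ : Set ℝ) := by
      ext ⟨x, y⟩
      simp [Set.mem_prod, eq_comm]
    rw [hset, Measure.volume_eq_prod, Measure.prod_prod]
    simp
  have h2 : ∀ᵐ q : ℝ×ℝ, q.2 ≠ 0 := by
    rw [ae_iff]
    simp only [ne_eq, not_not]
    have hset : {q : ℝ×ℝ | q.2 = 0} = (univ : Set ℝ) ×ˢ ({0} : Set ℝ) := by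
      ext ⟨x, y⟩
      simp [Set.mem_prod, eq_comm]
    rw [hset, Measure.volume_eq_prod, Measure.prod_prod]
    simp
  have hcongr : (∫ q : ℝ × ℝ, ‖charF (ProbabilityTheory.expMeasure l) (q.1 + q.2)
        - charF (ProbabilityTheory.expMeasure l) q.1 * charF (ProbabilityTheory.expMeasure l) q.2‖ ^ 2
        / (q.1 ^ 2 * q.2 ^ 2)) = ∫ q : ℝ × ℝ, G q := by
    apply integral_congr_ae
    filter_upwards [h1, h2] with q hq1 hq2
    exact ptwise l hl q.1 q.2 hq1 hq2
  have hsplit : ∫ q : ℝ × ℝ, G q = ∫ s : ℝ, ∫ t : ℝ, G (s, t) := by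
    rw [Measure.volume_eq_prod]
    rw [Measure.volume_eq_prod] at hGint
    exact integral_prod G hGint
  have hs_ne : ∀ᵐ s : ℝ, s ≠ 0 := by
    rw [ae_iff]
    simp only [ne_eq, not_not]
    have : {s : ℝ | s = 0} = ({0} : Set ℝ) := by ext; simp
    rw [this]
    exact measure_singleton 0
  have hout : (∫ s : ℝ, ∫ t : ℝ, G (s, t))
      = ∫ s : ℝ, (2*π/(3*l)) * ((l^2+s^2)⁻¹ - ((2*l)^2+s^2)⁻¹) := by
    apply integral_congr_ae
    filter_upwards [hs_ne] with s hs
    have hptG : ∀ t : ℝ, G (s,t) = (l^2/(l^2+s^2)) * ((l^2+t^2)*(l^2+(s+t)^2))⁻¹ := by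
      intro t
      rw [hG]
      dsimp only
      have p1 : (l^2+s^2) ≠ 0 := by positivity
      have p2 : (l^2+t^2) ≠ 0 := by positivity
      have p3 : (l^2+(s+t)^2) ≠ 0 := by positivity
      field_simp
    have hstep : (∫ t : ℝ, G (s,t)) = (l^2/(l^2+s^2)) * (2*π/(l*(s^2+4*l^2))) := by
      rw [integral_congr_ae (Eventually.of_forall hptG), integral_const_mul _ _,
        inner_int l s hl hs]
    rw [hstep]
    have p1 : (l^2+s^2) ≠ 0 := by positivity
    have p2 : s^2+4*l^2 ≠ 0 := by positivity
    field_simp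
    ring
  rw [distVar, hcongr, hsplit, hout, integral_const_mul _ _,
    integral_sub (integrable_inv_sq_add l hl) (integrable_inv_sq_add (2*l) (by positivity)),
    integral_inv_sq_add l hl, integral_inv_sq_add (2*l) (by positivity)]
  have hπ := Real.pi_ne_zero
  field_simp
  ring
end
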